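/- arXiv:1310.1999 — 4 statements merged into one kernel-verified Lean document; each statement's English description precedes it below -/
import Mathlib

section
/- Let c ≥ 1/2, 0 < B < A, and λ > 0. Then ∫₀¹ (1-u)^{c-1/2} / (A - B u)^{c+λ+1/2} du ≤ C / (A^{c+1/2} (A-B)^λ) for a constant C depending only on c and λ. -/
open MeasureTheory

/-- Let `c ≥ 1/2`, `0 < B < A` and `λ > 0`. Then
`∫₀¹ (1-u)^(c-1/2) / (A - B u)^(c+λ+1/2) du ≤ C / (A^(c+1/2) (A-B)^λ)`
for a constant `C` depending only on `c` and `λ`. -/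
theorem statement0 (c lam : ℝ) (hc : (1:ℝ)/2 ≤ c) (hlam : 0 < lam) :
    ∃ C : ℝ, 0 < C ∧ ∀ A B : ℝ, 0 < B → B < A →
      ∫ u in Set.Ioo (0:ℝ) 1, (1 - u) ^ (c - 1/2) / (A - B * u) ^ (c + lam + 1/2)
        ≤ C / (A ^ (c + 1/2) * (A - B) ^ lam) := by
  have hc0 : (0:ℝ) < c + 1/2 := by linarith
  have hp0 : (0:ℝ) < c + lam + 1/2 := by linarith
  refine ⟨1/(c+1/2) + 1/lam, by positivity, ?_⟩
  intro A B hB hBA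
  have hA : 0 < A := hB.trans hBA
  have hD : 0 < A - B := by linarith
  set p := c + lam + 1/2 with hp
  set u₀ : ℝ := B / A with hu₀def
  have hu₀0 : 0 < u₀ := by positivity
  have hu₀1 : u₀ < 1 := (div_lt_one hA).mpr hBA
  have h1u₀ : 1 - u₀ = (A - B)/A := by rw [hu₀def]; field_simp
  have h1u₀0 : 0 < 1 - u₀ := by linarith
  set f : ℝ → ℝ := fun u => (1 - u) ^ (c - 1/2) / (A - B * u) ^ p with hf
  have hden : ∀ u ∈ Set.Ioo (0:ℝ) 1, A - B ≤ A - B * u := by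
    intro u hu
    nlinarith [hu.1, hu.2]
  have hdenA : ∀ u ∈ Set.Ioo (0:ℝ) 1, A * (1 - u) ≤ A - B * u := by
    intro u hu
    nlinarith [hu.1, hu.2]
  have hmeas : Measurable f := by fun_prop
  -- integrability of f on (0,1)
  have hintf : IntegrableOn f (Set.Ioo (0:ℝ) 1) := by
    apply Measure.integrableOn_of_bounded (M := ((A-B)^p)⁻¹)
    · rw [Real.volume_Ioo]; exact ENNReal.ofReal_ne_top
    · exact hmeas.aestronglyMeasurable
    · filter_upwards [ae_restrict_mem measurableSet_Ioo] with u hu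
      have h1 : 0 < 1 - u := by linarith [hu.2]
      have h2 : 0 < A - B * u := lt_of_lt_of_le hD (hden u hu)
      have hnum : (1-u)^(c-1/2) ≤ 1 :=
        Real.rpow_le_one h1.le (by linarith [hu.1]) (by linarith)
      have hfnn : 0 ≤ f u := by simp only [hf]; positivity
      rw [Real.norm_eq_abs, abs_of_nonneg hfnn]
      simp only [hf]
      calc (1 - u) ^ (c - 1/2) / (A - B * u) ^ p ≤ 1 / (A - B*u)^p := by
            gcongr
        _ ≤ ((A-B)^p)⁻¹ := by
            rw [one_div]
            gcongr
            nlinarith [hu.1, hu.2]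
  -- splitting
  have hsub1 : Set.Ioc (0:ℝ) u₀ ⊆ Set.Ioo (0:ℝ) 1 :=
    fun x hx => ⟨hx.1, lt_of_le_of_lt hx.2 hu₀1⟩
  have hsub2 : Set.Ioo u₀ (1:ℝ) ⊆ Set.Ioo (0:ℝ) 1 :=
    fun x hx => ⟨hu₀0.trans hx.1, hx.2⟩
  have hsplit : ∫ u in Set.Ioo (0:ℝ) 1, f u
      = (∫ u in Set.Ioc (0:ℝ) u₀, f u) + ∫ u in Set.Ioo u₀ 1, f u := by
    rw [← setIntegral_union (by
        simp only [Set.disjoint_left]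
        rintro x ⟨_, hx2⟩ ⟨hx3, _⟩
        exact absurd hx3 (not_lt.2 hx2)) measurableSet_Ioo
      (hintf.mono_set hsub1) (hintf.mono_set hsub2),
      Set.Ioc_union_Ioo_eq_Ioo hu₀0.le hu₀1]
  -- interval integrability of the majorants
  have hII1 : IntervalIntegrable (fun u : ℝ => (1 - u) ^ (-1 - lam)) volume 0 u₀ := by
    have h := (intervalIntegral.intervalIntegrable_rpow (r := -1-lam) (a := 1) (b := 1 - u₀)
        (Or.inr (Set.notMem_uIcc_of_lt one_pos h1u₀0))).comp_sub_left 1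
    simpa using h
  have hII2 : IntervalIntegrable (fun u : ℝ => (1 - u) ^ (c - 1/2)) volume u₀ 1 := by
    have h := (intervalIntegral.intervalIntegrable_rpow (r := c-1/2) (a := 1 - u₀) (b := 0)
        (Or.inl (by linarith))).comp_sub_left 1
    simpa using h
  -- values of the model integrals
  have hval1 : ∫ u in (0:ℝ)..u₀, (1 - u) ^ (-1 - lam)
      = ((1-u₀) ^ (-lam) - 1)/lam := by
    have h := intervalIntegral.integral_comp_sub_left (a := 0) (b := u₀)
      (fun x : ℝ => x ^ (-1 - lam)) 1
    rw [h, show (1:ℝ) - 0 = 1 from by ring,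
      integral_rpow (Or.inr ⟨by linarith, Set.notMem_uIcc_of_lt h1u₀0 one_pos⟩),
      show -1 - lam + 1 = -lam from by ring, Real.one_rpow]
    rw [div_neg, ← neg_div, neg_sub]
  have hval2 : ∫ u in u₀..1, (1-u)^(c-1/2) = (1-u₀)^(c+1/2)/(c+1/2) := by
    have h := intervalIntegral.integral_comp_sub_left (a := u₀) (b := 1)
      (fun x : ℝ => x ^ (c - 1/2)) 1
    rw [h, show (1:ℝ) - 1 = 0 from by ring,
      integral_rpow (Or.inl (by linarith)),
      show c - 1/2 + 1 = c + 1/2 from by ring, Real.zero_rpow hc0.ne', sub_zero]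
  -- bound on the first piece
  have hb1 : (∫ u in Set.Ioc (0:ℝ) u₀, f u) ≤ (1/lam) / (A^(c+1/2) * (A-B)^lam) := by
    have hintg : IntegrableOn (fun u : ℝ => A^(-p) * (1-u)^(-1-lam)) (Set.Ioc (0:ℝ) u₀) :=
      (intervalIntegrable_iff_integrableOn_Ioc_of_le hu₀0.le).mp (hII1.const_mul _)
    have hmono : (∫ u in Set.Ioc (0:ℝ) u₀, f u)
        ≤ ∫ u in Set.Ioc (0:ℝ) u₀, A^(-p) * (1-u)^(-1-lam) := by
      apply setIntegral_mono_on (hintf.mono_set hsub1) hintg measurableSet_Ioc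
      intro u hu
      have hu' : u ∈ Set.Ioo (0:ℝ) 1 := hsub1 hu
      have h1 : 0 < 1 - u := by linarith [hu'.2]
      have h2 : 0 < A * (1 - u) := by positivity
      simp only [hf]
      calc (1 - u) ^ (c - 1/2) / (A - B * u) ^ p
          ≤ (1-u)^(c-1/2) / (A*(1-u))^p := by
            gcongr
            exact hdenA u hu'
        _ = A^(-p) * (1-u)^(-1-lam) := by
            rw [Real.mul_rpow hA.le h1.le, div_mul_eq_div_div_swap, ← Real.rpow_sub h1,
              show c - 1/2 - p = -1 - lam from by rw [hp]; ring,
              div_eq_mul_inv, ← Real.rpow_neg hA.le, mul_comm]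
    calc (∫ u in Set.Ioc (0:ℝ) u₀, f u)
        ≤ ∫ u in Set.Ioc (0:ℝ) u₀, A^(-p) * (1-u)^(-1-lam) := hmono
      _ = A^(-p) * ∫ u in Set.Ioc (0:ℝ) u₀, (1-u)^(-1-lam) := integral_const_mul _ _
      _ = A^(-p) * (((1-u₀)^(-lam) - 1)/lam) := by
          rw [← intervalIntegral.integral_of_le hu₀0.le, hval1]
      _ ≤ A^(-p) * ((1-u₀)^(-lam)/lam) := by
          have hApos : (0:ℝ) < A^(-p) := Real.rpow_pos_of_pos hA _
          gcongr
          linarith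
      _ = (1/lam) / (A^(c+1/2) * (A-B)^lam) := by
          rw [h1u₀, Real.rpow_neg hA.le, Real.rpow_neg (by positivity),
            Real.div_rpow hD.le hA.le, hp,
            show c + lam + 1/2 = (c+1/2) + lam from by ring, Real.rpow_add hA]
          have h1 : A^(c+1/2) ≠ 0 := by positivity
          have h2 : A^lam ≠ 0 := by positivity
          have h3 : (A-B)^lam ≠ 0 := by positivity
          field_simp
  -- bound on the second piece
  have hb2 : (∫ u in Set.Ioo u₀ 1, f u) ≤ (1/(c+1/2)) / (A^(c+1/2) * (A-B)^lam) := by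
    have hintg : IntegrableOn (fun u : ℝ => (A-B)^(-p) * (1-u)^(c-1/2)) (Set.Ioo u₀ 1) :=
      (((intervalIntegrable_iff_integrableOn_Ioc_of_le hu₀1.le).mp
        (hII2.const_mul _)).mono_set Set.Ioo_subset_Ioc_self)
    have hmono : (∫ u in Set.Ioo u₀ 1, f u)
        ≤ ∫ u in Set.Ioo u₀ 1, (A-B)^(-p) * (1-u)^(c-1/2) := by
      apply setIntegral_mono_on (hintf.mono_set hsub2) hintg measurableSet_Ioo
      intro u hu
      have hu' : u ∈ Set.Ioo (0:ℝ) 1 := hsub2 hu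
      have h1 : 0 < 1 - u := by linarith [hu'.2]
      simp only [hf]
      calc (1 - u) ^ (c - 1/2) / (A - B * u) ^ p
          ≤ (1-u)^(c-1/2) / (A-B)^p := by
            gcongr
            nlinarith [hu'.1, hu'.2]
        _ = (A-B)^(-p) * (1-u)^(c-1/2) := by
            rw [Real.rpow_neg hD.le, div_eq_mul_inv, mul_comm]
    calc (∫ u in Set.Ioo u₀ 1, f u)
        ≤ ∫ u in Set.Ioo u₀ 1, (A-B)^(-p) * (1-u)^(c-1/2) := hmono
      _ = (A-B)^(-p) * ∫ u in Set.Ioo u₀ 1, (1-u)^(c-1/2) := integral_const_mul _ _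
      _ = (A-B)^(-p) * ((1-u₀)^(c+1/2)/(c+1/2)) := by
          rw [← integral_Ioc_eq_integral_Ioo, ← intervalIntegral.integral_of_le hu₀1.le, hval2]
      _ = (1/(c+1/2)) / (A^(c+1/2) * (A-B)^lam) := by
          rw [h1u₀, Real.rpow_neg hD.le, Real.div_rpow hD.le hA.le, hp,
            show c + lam + 1/2 = (c+1/2) + lam from by ring, Real.rpow_add hD]
          have h1 : A^(c+1/2) ≠ 0 := by positivity
          have h2 : (A-B)^(c+1/2) ≠ 0 := by positivity
          have h3 : (A-B)^lam ≠ 0 := by positivity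
          field_simp
  calc ∫ u in Set.Ioo (0:ℝ) 1, f u
      = (∫ u in Set.Ioc (0:ℝ) u₀, f u) + ∫ u in Set.Ioo u₀ 1, f u := hsplit
    _ ≤ (1/lam)/(A^(c+1/2)*(A-B)^lam) + (1/(c+1/2))/(A^(c+1/2)*(A-B)^lam) :=
        add_le_add hb1 hb2
    _ = (1/(c+1/2) + 1/lam)/(A^(c+1/2)*(A-B)^lam) := by
        rw [← add_div, add_comm]
end

section
/- For d ≥ 2 and r, s > 0 with r ≠ s, sup over ω ∈ S^{d-1} of ∫_{S^{d-1}} |rω - sω'|^{-d} dω' ≤ C |r-s|^{-1} (r² + s²)^{-(d-1)/2} for a constant C depending only on d. -/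
open MeasureTheory Metric Set Real Filter
open scoped ENNReal





lemma lint_one_dim (a b : ℝ) (ha : 0 < a) (hb : 0 < b) :
    ∫⁻ r in Set.Ioi (0:ℝ), ENNReal.ofReal ((a^2 + b^2*r^2)⁻¹)
      ≤ ENNReal.ofReal (π/(2*a*b)) := by
  set F : ℝ → ℝ := fun r => (a*b)⁻¹ * Real.arctan (b/a * r) with hF
  have hderiv : ∀ x ∈ Set.Ici (0:ℝ), HasDerivAt F ((a^2 + b^2*x^2)⁻¹) x := by
    intro x _
    have h1 : HasDerivAt (fun r : ℝ => b/a * r) (b/a) x := by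
      simpa using (hasDerivAt_id x).const_mul (b/a)
    have h2 : HasDerivAt (fun r : ℝ => Real.arctan (b/a * r))
        (1 / (1 + (b/a*x)^2) * (b/a)) x := (Real.hasDerivAt_arctan _).comp x h1
    have h3 := h2.const_mul ((a*b)⁻¹)
    convert h3 using 1
    · rfl
    · rfl
    field_simp
  have hpos : ∀ x ∈ Set.Ioi (0:ℝ), 0 ≤ (a^2 + b^2*x^2)⁻¹ := by
    intro x _; positivity
  have htend : Tendsto F atTop (nhds (π/(2*a*b))) := by
    have h1 : Tendsto (fun r : ℝ => b/a * r) atTop atTop :=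
      Tendsto.const_mul_atTop (by positivity) tendsto_id
    have h2 : Tendsto (fun r : ℝ => Real.arctan (b/a * r)) atTop (nhds (π/2)) :=
      (Real.tendsto_arctan_atTop.mono_right nhdsWithin_le_nhds).comp h1
    have h3 := h2.const_mul ((a*b)⁻¹)
    have : π/(2*a*b) = (a*b)⁻¹ * (π/2) := by field_simp
    rw [this]
    exact h3
  have hint : IntegrableOn (fun x => (a^2 + b^2*x^2)⁻¹) (Set.Ioi (0:ℝ)) :=
    integrableOn_Ioi_deriv_of_nonneg' hderiv hpos htend
  have hval : ∫ x in Set.Ioi (0:ℝ), (a^2 + b^2*x^2)⁻¹ = π/(2*a*b) - F 0 :=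
    integral_Ioi_of_hasDerivAt_of_nonneg' hderiv hpos htend
  have hF0 : F 0 = 0 := by simp [hF]
  rw [← ofReal_integral_eq_lintegral_ofReal hint
    ((ae_restrict_iff' measurableSet_Ioi).2 (ae_of_all _ hpos))]
  rw [hval, hF0, sub_zero]


lemma lint_norm (m : ℕ) (g : ℝ → ℝ≥0∞) (hg : Measurable g) :
    ∫⁻ x : EuclideanSpace ℝ (Fin (m+1)), g ‖x‖
      = (volume (ball (0:EuclideanSpace ℝ (Fin (m+1))) 1)) * (m+1)
          * ∫⁻ r in Set.Ioi (0:ℝ), ENNReal.ofReal (r^m) * g r := by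
  set E := EuclideanSpace ℝ (Fin (m+1))
  have hdim : Module.finrank ℝ E = m + 1 := finrank_euclideanSpace_fin
  have step1 : ∫⁻ x : E, g ‖x‖ = ∫⁻ x : ({0}ᶜ : Set E), g ‖x.1‖ ∂(volume.comap (Subtype.val : ({0}ᶜ : Set E) → E)) := by
    rw [lintegral_subtype_comap (measurableSet_singleton (0:E)).compl (fun a => g ‖a‖)]
    rw [MeasureTheory.restrict_compl_singleton]
  have mp := (volume : Measure E).measurePreserving_homeomorphUnitSphereProd
  have hmeas : Measurable fun p : sphere (0:E) 1 × Set.Ioi (0:ℝ) => g p.2.1 :=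
    (hg.comp measurable_subtype_coe).comp measurable_snd
  have step2 : ∫⁻ x : ({0}ᶜ : Set E), g ‖x.1‖ ∂(volume.comap (Subtype.val : ({0}ᶜ : Set E) → E))
      = ∫⁻ p : sphere (0:E) 1 × Set.Ioi (0:ℝ), g p.2.1
          ∂((volume : Measure E).toSphere.prod (.volumeIoiPow (Module.finrank ℝ E - 1))) := by
    rw [← mp.lintegral_comp hmeas]
    simp only [homeomorphUnitSphereProd_apply_snd_coe]
  have step3 : ∫⁻ p : sphere (0:E) 1 × Set.Ioi (0:ℝ), g p.2.1
          ∂((volume : Measure E).toSphere.prod (.volumeIoiPow (Module.finrank ℝ E - 1)))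
      = (volume : Measure E).toSphere Set.univ
          * ∫⁻ rr : Set.Ioi (0:ℝ), g rr.1 ∂(Measure.volumeIoiPow (Module.finrank ℝ E - 1)) := by
    rw [lintegral_prod _ hmeas.aemeasurable]
    simp [lintegral_const]
    ring
  have step4 : ∫⁻ rr : Set.Ioi (0:ℝ), g rr.1 ∂(Measure.volumeIoiPow (Module.finrank ℝ E - 1))
      = ∫⁻ r in Set.Ioi (0:ℝ), ENNReal.ofReal (r^m) * g r := by
    rw [Measure.volumeIoiPow]
    rw [lintegral_withDensity_eq_lintegral_mul _
      ((measurable_subtype_coe.pow_const _).ennreal_ofReal)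
      (show Measurable fun rr : Set.Ioi (0:ℝ) => g rr.1 from hg.comp measurable_subtype_coe)]
    simp only [Pi.mul_apply, hdim, Nat.add_sub_cancel]
    rw [lintegral_subtype_comap measurableSet_Ioi (fun r => ENNReal.ofReal (r ^ m) * g r)]
  rw [step1, step2, step3, step4, Measure.toSphere_apply_univ, hdim]
  push_cast
  ring


lemma lint_sphere (k : ℕ)
    (h : sphere (0 : EuclideanSpace ℝ (Fin (k+1))) 1 → ℝ≥0∞) (hh : Measurable h)
    (H : EuclideanSpace ℝ (Fin (k+1)) → ℝ≥0∞) (hH : Measurable H)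
    (hcomp : ∀ x : ({0}ᶜ : Set (EuclideanSpace ℝ (Fin (k+1)))),
        H x.1 = h ((homeomorphUnitSphereProd (EuclideanSpace ℝ (Fin (k+1)))) x).1) :
    ∫⁻ ω', h ω' ∂(volume : Measure (EuclideanSpace ℝ (Fin (k+1)))).toSphere
      = (k+1 : ℝ≥0∞) * ∫⁻ x in ball (0 : EuclideanSpace ℝ (Fin (k+1))) 1, H x := by
  classical
  have hdim : Module.finrank ℝ (EuclideanSpace ℝ (Fin (k+1))) = k + 1 := finrank_euclideanSpace_fin
  set ν := Measure.volumeIoiPow (Module.finrank ℝ (EuclideanSpace ℝ (Fin (k+1))) - 1) with hν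
  have mp := (volume : Measure (EuclideanSpace ℝ (Fin (k+1)))).measurePreserving_homeomorphUnitSphereProd
  set F : sphere (0:EuclideanSpace ℝ (Fin (k+1))) 1 × Set.Ioi (0:ℝ) → ℝ≥0∞ :=
    fun p => h p.1 * (Set.Iio (⟨1, Set.mem_Ioi.2 one_pos⟩ : Set.Ioi (0:ℝ))).indicator 1 p.2 with hF
  have hind : Measurable ((Set.Iio (⟨1, Set.mem_Ioi.2 one_pos⟩ : Set.Ioi (0:ℝ))).indicator
      (1 : Set.Ioi (0:ℝ) → ℝ≥0∞)) := measurable_one.indicator measurableSet_Iio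
  have hFmeas : Measurable F := (hh.comp measurable_fst).mul (hind.comp measurable_snd)
  have stepA : ∫⁻ p, F p ∂((volume : Measure (EuclideanSpace ℝ (Fin (k+1)))).toSphere.prod ν)
      = (∫⁻ ω', h ω' ∂(volume : Measure (EuclideanSpace ℝ (Fin (k+1)))).toSphere) * ν (Set.Iio ⟨1, Set.mem_Ioi.2 one_pos⟩) := by
    rw [lintegral_prod _ hFmeas.aemeasurable]
    have : ∀ ω : sphere (0:EuclideanSpace ℝ (Fin (k+1))) 1, ∫⁻ rr, F (ω, rr) ∂ν = h ω * ν (Set.Iio ⟨1, Set.mem_Ioi.2 one_pos⟩) := by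
      intro ω
      rw [hF]
      simp only
      rw [lintegral_const_mul _ hind, lintegral_indicator_one measurableSet_Iio]
    simp_rw [this]
    rw [lintegral_mul_const _ hh]
  have stepB : ν (Set.Iio ⟨1, Set.mem_Ioi.2 one_pos⟩) = ENNReal.ofReal (1/(k+1)) := by
    rw [hν, Measure.volumeIoiPow_apply_Iio]
    simp [hdim]
  have stepC : ∫⁻ p, F p ∂((volume : Measure (EuclideanSpace ℝ (Fin (k+1)))).toSphere.prod ν)
      = ∫⁻ x in ball (0 : EuclideanSpace ℝ (Fin (k+1))) 1, H x := by
    rw [← mp.lintegral_comp hFmeas]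
    have : ∀ x : ({0}ᶜ : Set (EuclideanSpace ℝ (Fin (k+1)))), F (homeomorphUnitSphereProd (EuclideanSpace ℝ (Fin (k+1))) x)
        = (ball (0:EuclideanSpace ℝ (Fin (k+1))) 1).indicator H x.1 := by
      intro x
      rw [hF]
      simp only
      rw [← hcomp x]
      rw [Set.indicator_apply, Set.indicator_apply]
      have hmem : ((homeomorphUnitSphereProd (EuclideanSpace ℝ (Fin (k+1)))) x).2 ∈ Set.Iio (⟨1, Set.mem_Ioi.2 one_pos⟩ : Set.Ioi (0:ℝ))
          ↔ x.1 ∈ ball (0:EuclideanSpace ℝ (Fin (k+1))) 1 := by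
        simp only [homeomorphUnitSphereProd_apply_snd_coe, Set.mem_Iio, mem_ball_zero_iff,
          ← Subtype.coe_lt_coe]
      split_ifs with h1 h2 h2
      · rw [Pi.one_apply, mul_one]
      · exact absurd (hmem.1 h1) h2
      · exact absurd (hmem.2 h2) h1
      · rw [mul_zero]
    simp_rw [this]
    rw [lintegral_subtype_comap (measurableSet_singleton (0:EuclideanSpace ℝ (Fin (k+1)))).compl
      ((ball (0:EuclideanSpace ℝ (Fin (k+1))) 1).indicator H)]
    rw [MeasureTheory.restrict_compl_singleton]
    rw [lintegral_indicator measurableSet_ball]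
  have key : (∫⁻ ω', h ω' ∂(volume : Measure (EuclideanSpace ℝ (Fin (k+1)))).toSphere) * ENNReal.ofReal (1/(k+1))
      = ∫⁻ x in ball (0 : EuclideanSpace ℝ (Fin (k+1))) 1, H x := by rw [← stepB, ← stepA, stepC]
  have hcancel : ENNReal.ofReal (1/(k+1:ℝ)) * (k+1 : ℝ≥0∞) = 1 := by
    rw [show ((k:ℝ≥0∞)+1) = ENNReal.ofReal ((k:ℝ)+1) by
      rw [ENNReal.ofReal_add (by positivity) zero_le_one]; simp]
    rw [← ENNReal.ofReal_mul (by positivity)]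
    rw [one_div, inv_mul_cancel₀ (by positivity)]
    simp
  calc ∫⁻ ω', h ω' ∂(volume : Measure (EuclideanSpace ℝ (Fin (k+1)))).toSphere
      = (∫⁻ ω', h ω' ∂(volume : Measure (EuclideanSpace ℝ (Fin (k+1)))).toSphere) * (ENNReal.ofReal (1/(k+1)) * (k+1 : ℝ≥0∞)) := by
        rw [hcancel, mul_one]
    _ = ((∫⁻ ω', h ω' ∂(volume : Measure (EuclideanSpace ℝ (Fin (k+1)))).toSphere) * ENNReal.ofReal (1/(k+1))) * (k+1 : ℝ≥0∞) := by
        rw [mul_assoc]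
    _ = (k+1 : ℝ≥0∞) * ∫⁻ x in ball (0 : EuclideanSpace ℝ (Fin (k+1))) 1, H x := by rw [key, mul_comm]


lemma lint_fubini (n : ℕ) (g : ℝ → ℝ≥0∞) (hg : Measurable g) :
    ∫⁻ x : EuclideanSpace ℝ (Fin (n+1)) in {x : EuclideanSpace ℝ (Fin (n+1)) | x 0 ∈ Set.Ioo (-1:ℝ) 1},
        g (Real.sqrt (∑ i : Fin n, (x i.succ)^2))
      = ENNReal.ofReal 2 * ∫⁻ z : EuclideanSpace ℝ (Fin n), g ‖z‖ := by
  classical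
  have hTmeas : Measurable fun x : EuclideanSpace ℝ (Fin (n+1)) =>
      g (Real.sqrt (∑ i : Fin n, (x i.succ)^2)) := by
    apply hg.comp
    apply Real.continuous_sqrt.measurable.comp
    apply Finset.measurable_sum
    intro i _
    exact ((EuclideanSpace.proj (i.succ : Fin (n+1))).continuous.measurable :
      Measurable fun x : EuclideanSpace ℝ (Fin (n+1)) => x i.succ).pow_const 2
  have hset : MeasurableSet {x : EuclideanSpace ℝ (Fin (n+1)) | x 0 ∈ Set.Ioo (-1:ℝ) 1} := by
    have : Measurable fun x : EuclideanSpace ℝ (Fin (n+1)) => x 0 :=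
      (EuclideanSpace.proj (0 : Fin (n+1))).continuous.measurable
    exact this measurableSet_Ioo
  rw [← lintegral_indicator hset]
  -- step 1: to Pi space
  set F : (Fin (n+1) → ℝ) → ℝ≥0∞ := fun y =>
    (Set.Ioo (-1:ℝ) 1).indicator 1 (y 0) * g (Real.sqrt (∑ i : Fin n, (y i.succ)^2)) with hFdef
  have hFmeas : Measurable F := by
    apply Measurable.mul
    · exact (measurable_one.indicator measurableSet_Ioo).comp (measurable_pi_apply 0)
    · apply hg.comp
      apply Real.continuous_sqrt.measurable.comp
      exact Finset.measurable_sum _ fun i _ => (measurable_pi_apply (i.succ)).pow_const 2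
  have step1 : ∫⁻ x : EuclideanSpace ℝ (Fin (n+1)),
        ({x : EuclideanSpace ℝ (Fin (n+1)) | x 0 ∈ Set.Ioo (-1:ℝ) 1}).indicator
          (fun x => g (Real.sqrt (∑ i : Fin n, (x i.succ)^2))) x
      = ∫⁻ y : Fin (n+1) → ℝ, F y := by
    rw [← (EuclideanSpace.volume_preserving_symm_measurableEquiv_toLp (Fin (n+1))).lintegral_comp hFmeas]
    congr 1
    funext x
    have hcoord : ∀ j : Fin (n+1), ((MeasurableEquiv.toLp 2 (Fin (n+1) → ℝ)).symm x) j = x j :=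
      fun j => rfl
    rw [hFdef]
    simp only [hcoord]
    rw [Set.indicator_apply]
    split_ifs with hx
    · rw [Set.mem_setOf_eq] at hx
      rw [Set.indicator_of_mem hx, Pi.one_apply, one_mul]
    · rw [Set.mem_setOf_eq] at hx
      rw [Set.indicator_of_notMem hx, zero_mul]
  have hGmeas : Measurable fun z : Fin n → ℝ => g (Real.sqrt (∑ i : Fin n, (z i)^2)) :=
    hg.comp (Real.continuous_sqrt.measurable.comp
      (Finset.measurable_sum _ fun i _ => (measurable_pi_apply i).pow_const 2))
  -- step 2: split off coordinate 0
  have step2 : ∫⁻ y : Fin (n+1) → ℝ, F y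
      = ∫⁻ p : ℝ × (Fin n → ℝ),
          (Set.Ioo (-1:ℝ) 1).indicator 1 p.1 * g (Real.sqrt (∑ i : Fin n, (p.2 i)^2)) := by
    rw [← ((volume_preserving_piFinSuccAbove (fun _ : Fin (n+1) => ℝ) 0).symm).lintegral_comp
      hFmeas]
    refine lintegral_congr fun p => ?_
    rw [hFdef]
    have h0 : ((MeasurableEquiv.piFinSuccAbove (fun _ : Fin (n+1) => ℝ) 0).symm p) 0 = p.1 := by
      simp [MeasurableEquiv.piFinSuccAbove]
    have hsucc : ∀ i : Fin n,
        ((MeasurableEquiv.piFinSuccAbove (fun _ : Fin (n+1) => ℝ) 0).symm p) i.succ = p.2 i := by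
      intro i
      simp only [MeasurableEquiv.piFinSuccAbove]
      rw [show (i.succ : Fin (n+1)) = (0 : Fin (n+1)).succAbove i by simp [Fin.succAbove_zero]]
      simp
    simp only [h0, hsucc]
  -- step 3: product integral
  have step3 : ∫⁻ p : ℝ × (Fin n → ℝ),
          (Set.Ioo (-1:ℝ) 1).indicator 1 p.1 * g (Real.sqrt (∑ i : Fin n, (p.2 i)^2))
      = ENNReal.ofReal 2 * ∫⁻ z : Fin n → ℝ, g (Real.sqrt (∑ i : Fin n, (z i)^2)) := by
    rw [MeasureTheory.Measure.volume_eq_prod]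
    rw [lintegral_prod_mul (f := fun c : ℝ => (Set.Ioo (-1:ℝ) 1).indicator 1 c)
      (g := fun z : Fin n → ℝ => g (Real.sqrt (∑ i : Fin n, (z i)^2)))
      ((measurable_one.indicator measurableSet_Ioo).aemeasurable) hGmeas.aemeasurable]
    congr 1
    rw [lintegral_indicator_one measurableSet_Ioo]
    rw [Real.volume_Ioo]
    norm_num
  -- step 4: back to Euclidean space
  have step4 : ∫⁻ z : Fin n → ℝ, g (Real.sqrt (∑ i : Fin n, (z i)^2))
      = ∫⁻ z : EuclideanSpace ℝ (Fin n), g ‖z‖ := by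
    rw [← (EuclideanSpace.volume_preserving_symm_measurableEquiv_toLp (Fin n)).lintegral_comp hGmeas]
    congr 1
    funext z
    have hcoord : ∀ j : Fin n, ((MeasurableEquiv.toLp 2 (Fin n → ℝ)).symm z) j = z j := fun j => rfl
    simp only [hcoord]
    congr 1
    rw [EuclideanSpace.norm_eq]
    simp [Real.norm_eq_abs, sq_abs]
  rw [step1, step2, step3, step4]


lemma geom_claim (n : ℕ) (x : EuclideanSpace ℝ (Fin (n+1))) (hx : ‖x‖ ≤ 1) :
    Real.sqrt (∑ i : Fin n, (x i.succ)^2)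
      ≤ ‖(EuclideanSpace.single (0:Fin (n+1)) (1:ℝ)) - ‖x‖⁻¹ • x‖ := by
  rcases eq_or_ne x 0 with rfl | hx0
  · simp
  have hu : 0 < ‖x‖ := norm_pos_iff.2 hx0
  set v := ‖x‖ • (EuclideanSpace.single (0:Fin (n+1)) (1:ℝ)) - x with hv
  have key1 : ‖(EuclideanSpace.single (0:Fin (n+1)) (1:ℝ)) - ‖x‖⁻¹ • x‖ = ‖x‖⁻¹ * ‖v‖ := by
    have : (EuclideanSpace.single (0:Fin (n+1)) (1:ℝ)) - ‖x‖⁻¹ • x = ‖x‖⁻¹ • v := by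
      rw [hv, smul_sub, smul_smul, inv_mul_cancel₀ hu.ne', one_smul]
    rw [this, norm_smul, Real.norm_eq_abs, abs_of_pos (by positivity)]
  have key2 : Real.sqrt (∑ i : Fin n, (x i.succ)^2) ≤ ‖v‖ := by
    rw [EuclideanSpace.norm_eq]
    apply Real.sqrt_le_sqrt
    have hterm : ∀ i : Fin n, ‖v i.succ‖^2 = (x i.succ)^2 := by
      intro i
      have : v i.succ = - x i.succ := by
        simp [hv, EuclideanSpace.single_apply, Fin.succ_ne_zero]
      rw [this]
      simp [Real.norm_eq_abs, sq_abs]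
    calc ∑ i : Fin n, (x i.succ)^2 = ∑ i : Fin n, ‖v i.succ‖^2 := by
          exact Finset.sum_congr rfl fun i _ => (hterm i).symm
      _ ≤ ∑ j : Fin (n+1), ‖v j‖^2 := by
          rw [Fin.sum_univ_succ]
          have : (0:ℝ) ≤ ‖v 0‖^2 := by positivity
          linarith
  calc Real.sqrt (∑ i : Fin n, (x i.succ)^2) ≤ ‖v‖ := key2
    _ ≤ ‖x‖⁻¹ * ‖v‖ := by
        nth_rewrite 1 [show ‖v‖ = 1 * ‖v‖ by ring]
        apply mul_le_mul_of_nonneg_right _ (norm_nonneg _)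
        rw [le_inv_comm₀ one_pos hu]
        simpa using hx
    _ = ‖(EuclideanSpace.single (0:Fin (n+1)) (1:ℝ)) - ‖x‖⁻¹ • x‖ := key1.symm

lemma ptwise_bound (m : ℕ) {b r c : ℝ} (hb : 0 < b) (hr : 0 < r) (hbr : (b*r)^2 ≤ c) :
    r^m * c ^ (-((m:ℝ)+2)/2) ≤ (b⁻¹)^m * c⁻¹ := by
  have hc : 0 < c := lt_of_lt_of_le (by positivity) hbr
  have e1 : c ^ (-((m:ℝ)+2)/2) = c ^ (-(m:ℝ)/2) * c⁻¹ := by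
    rw [← Real.rpow_neg_one c, ← Real.rpow_add hc]
    ring_nf
  have e2 : c ^ (-(m:ℝ)/2) ≤ ((b*r)^2) ^ (-(m:ℝ)/2) := by
    apply Real.rpow_le_rpow_of_nonpos (by positivity) hbr
    have : (0:ℝ) ≤ (m:ℝ) := Nat.cast_nonneg m
    linarith
  have e3 : (((b*r)^2 : ℝ)) ^ (-(m:ℝ)/2) = ((b*r)^m)⁻¹ := by
    rw [← Real.rpow_natCast (b*r) 2, ← Real.rpow_mul (by positivity)]
    rw [show ((2:ℕ):ℝ) * (-(m:ℝ)/2) = -(m:ℝ) by push_cast; ring]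
    rw [Real.rpow_neg (by positivity), Real.rpow_natCast]
  calc r^m * c ^ (-((m:ℝ)+2)/2) = r^m * c ^ (-(m:ℝ)/2) * c⁻¹ := by rw [e1]; ring
    _ ≤ r^m * ((b*r)^m)⁻¹ * c⁻¹ := by
        apply mul_le_mul_of_nonneg_right _ (by positivity)
        apply mul_le_mul_of_nonneg_left _ (by positivity)
        rw [← e3]; exact e2
    _ = (b⁻¹)^m * c⁻¹ := by
        rw [mul_pow, mul_inv, inv_pow]
        field_simp
lemma norm_identity {E : Type*} [NormedAddCommGroup E] [InnerProductSpace ℝ E] (r s : ℝ)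
    (ω ω' : E) (hω : ‖ω‖ = 1) (hω' : ‖ω'‖ = 1) :
    ‖r • ω - s • ω'‖^2 = (r-s)^2 + (r*s) * ‖ω - ω'‖^2 := by
  have h1 := norm_sub_sq_real (r • ω) (s • ω')
  have h2 := norm_sub_sq_real ω ω'
  rw [norm_smul, norm_smul, real_inner_smul_left, real_inner_smul_right] at h1
  rw [hω, hω'] at h1 h2
  rw [h1, h2]
  simp only [Real.norm_eq_abs, mul_one, one_pow]
  rw [sq_abs, sq_abs]
  ring

lemma core_bound (m : ℕ) (a b : ℝ) (ha : 0 < a) (hb : 0 < b)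
    (ω : sphere (0 : EuclideanSpace ℝ (Fin (m+2))) 1) :
    ∫⁻ ω' : sphere (0 : EuclideanSpace ℝ (Fin (m+2))) 1,
        ENNReal.ofReal ((a^2 + b^2 * ‖(ω : EuclideanSpace ℝ (Fin (m+2)))
            - (ω' : EuclideanSpace ℝ (Fin (m+2)))‖^2) ^ (-((m:ℝ)+2)/2))
        ∂(volume : Measure (EuclideanSpace ℝ (Fin (m+2)))).toSphere
      ≤ ENNReal.ofReal (((m:ℝ)+2) * 2
          * ((volume (ball (0 : EuclideanSpace ℝ (Fin (m+1))) 1)).toReal * ((m:ℝ)+1))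
          * ((b⁻¹)^m * (π/(2*a*b)))) := by
  classical
  set g : ℝ → ℝ≥0∞ := fun t => ENNReal.ofReal ((a^2 + b^2*t^2) ^ (-((m:ℝ)+2)/2)) with hgdef
  have hbase : ∀ t : ℝ, 0 < a^2 + b^2*t^2 := fun t => by positivity
  have hcont : Continuous fun t : ℝ => a^2 + b^2*t^2 := by fun_prop
  have hgmeas : Measurable g :=
    ((hcont.rpow_const (fun t => Or.inl (hbase t).ne')).measurable).ennreal_ofReal
  have hganti : ∀ t₁ t₂ : ℝ, 0 ≤ t₁ → t₁ ≤ t₂ → g t₂ ≤ g t₁ := by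
    intro t₁ t₂ h₁ h₂
    apply ENNReal.ofReal_le_ofReal
    apply Real.rpow_le_rpow_of_nonpos (hbase t₁)
    · have : t₁^2 ≤ t₂^2 := by nlinarith
      nlinarith
    · have : (0:ℝ) ≤ (m:ℝ) := Nat.cast_nonneg m
      linarith
  set E := EuclideanSpace ℝ (Fin (m+2)) with hE
  set h : sphere (0 : EuclideanSpace ℝ (Fin (m+2))) 1 → ℝ≥0∞ :=
    fun ω'' => g ‖(ω : EuclideanSpace ℝ (Fin (m+2))) - (ω'' : EuclideanSpace ℝ (Fin (m+2)))‖
    with hhdef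
  have hhmeas : Measurable h :=
    hgmeas.comp ((continuous_const.sub continuous_subtype_val).norm.measurable)
  set H₀ : EuclideanSpace ℝ (Fin (m+2)) → ℝ≥0∞ :=
    fun x => g ‖(ω : EuclideanSpace ℝ (Fin (m+2))) - ‖x‖⁻¹ • x‖ with hH₀def
  have hH₀meas : Measurable H₀ := by
    apply hgmeas.comp
    apply Measurable.norm
    apply Measurable.sub measurable_const
    exact (continuous_norm.measurable.inv).smul measurable_id
  have hcomp : ∀ x : ({0}ᶜ : Set (EuclideanSpace ℝ (Fin (m+2)))),
      H₀ x.1 = h ((homeomorphUnitSphereProd (EuclideanSpace ℝ (Fin (m+2)))) x).1 := by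
    intro x
    rw [hH₀def, hhdef]
    simp only [homeomorphUnitSphereProd_apply_fst_coe]
  have step1 := lint_sphere (m+1) h hhmeas H₀ hH₀meas hcomp
  -- rotation
  obtain ⟨B, hB⟩ : ∃ B : OrthonormalBasis (Fin (m+2)) ℝ (EuclideanSpace ℝ (Fin (m+2))),
      B 0 = (ω : EuclideanSpace ℝ (Fin (m+2))) := by
    haveI : Subsingleton (({0} : Set (Fin (m+2)))) := by
      constructor
      rintro ⟨i, hi⟩ ⟨j, hj⟩
      simp only [Set.mem_singleton_iff] at hi hj
      subst hi; subst hj; rfl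
    have horth : Orthonormal ℝ (Set.restrict {0}
        (fun _ : Fin (m+2) => (ω : EuclideanSpace ℝ (Fin (m+2))))) := by
      constructor
      · intro i
        exact mem_sphere_zero_iff_norm.1 ω.2
      · intro i j hij
        exact absurd (Subsingleton.elim i j) hij
    obtain ⟨B, hB⟩ := horth.exists_orthonormalBasis_extension_of_card_eq
      (by simp [finrank_euclideanSpace_fin])
    exact ⟨B, hB 0 rfl⟩
  set e := B.repr.symm with he
  have he0 : e (EuclideanSpace.single (0 : Fin (m+2)) (1:ℝ))
      = (ω : EuclideanSpace ℝ (Fin (m+2))) := by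
    rw [he, ← hB, ← B.repr_self 0, LinearIsometryEquiv.symm_apply_apply]
  have hball : ⇑e ⁻¹' (ball (0 : EuclideanSpace ℝ (Fin (m+2))) 1)
      = ball (0 : EuclideanSpace ℝ (Fin (m+2))) 1 := by
    ext x
    simp only [Set.mem_preimage, mem_ball_zero_iff]
    rw [e.norm_map]
  have step2 : ∫⁻ x in ball (0 : EuclideanSpace ℝ (Fin (m+2))) 1, H₀ x
      = ∫⁻ x in ball (0 : EuclideanSpace ℝ (Fin (m+2))) 1,
          g ‖(EuclideanSpace.single (0 : Fin (m+2)) (1:ℝ)) - ‖x‖⁻¹ • x‖ := by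
    rw [← e.measurePreserving.setLIntegral_comp_preimage measurableSet_ball hH₀meas, hball]
    apply setLIntegral_congr_fun measurableSet_ball
    intro x _
    rw [hH₀def]
    simp only
    have hx1 : (↑ω : EuclideanSpace ℝ (Fin (m+2))) - ‖e x‖⁻¹ • e x
        = e (EuclideanSpace.single (0:Fin (m+2)) (1:ℝ) - ‖x‖⁻¹ • x) := by
      rw [e.map_sub, e.map_smul, he0, e.norm_map]
    rw [hx1, e.norm_map]
  have step3 : ∫⁻ x in ball (0 : EuclideanSpace ℝ (Fin (m+2))) 1,
          g ‖(EuclideanSpace.single (0 : Fin (m+2)) (1:ℝ)) - ‖x‖⁻¹ • x‖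
      ≤ ∫⁻ x in ball (0 : EuclideanSpace ℝ (Fin (m+2))) 1,
          g (Real.sqrt (∑ i : Fin (m+1), (x i.succ)^2)) := by
    apply setLIntegral_mono
    · apply hgmeas.comp
      apply Real.continuous_sqrt.measurable.comp
      exact Finset.measurable_sum _ fun i _ =>
        ((EuclideanSpace.proj (i.succ : Fin (m+2))).continuous.measurable :
          Measurable fun x : EuclideanSpace ℝ (Fin (m+2)) => x i.succ).pow_const 2
    · intro x hx
      apply hganti _ _ (Real.sqrt_nonneg _)
      exact geom_claim (m+1) x (le_of_lt (mem_ball_zero_iff.1 hx))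
  have step4 : ∫⁻ x in ball (0 : EuclideanSpace ℝ (Fin (m+2))) 1,
          g (Real.sqrt (∑ i : Fin (m+1), (x i.succ)^2))
      ≤ ∫⁻ x : EuclideanSpace ℝ (Fin (m+2)) in
          {x : EuclideanSpace ℝ (Fin (m+2)) | x 0 ∈ Set.Ioo (-1:ℝ) 1},
          g (Real.sqrt (∑ i : Fin (m+1), (x i.succ)^2)) := by
    apply lintegral_mono_set
    intro x hx
    rw [mem_ball_zero_iff] at hx
    have h1 : (x 0)^2 ≤ ‖x‖^2 := by
      rw [EuclideanSpace.norm_eq, Real.sq_sqrt (by positivity)]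
      have := Finset.single_le_sum (f := fun i : Fin (m+2) => ‖x i‖^2)
        (fun i _ => by positivity) (Finset.mem_univ 0)
      simpa [Real.norm_eq_abs, sq_abs] using this
    have h2 : |x 0| < 1 := by
      have : |x 0| ≤ ‖x‖ := by
        rw [← Real.sqrt_sq_eq_abs]
        calc Real.sqrt ((x 0)^2) ≤ Real.sqrt (‖x‖^2) := Real.sqrt_le_sqrt h1
          _ = ‖x‖ := Real.sqrt_sq (norm_nonneg x)
      linarith
    exact Set.mem_setOf_eq ▸ abs_lt.1 h2
  have step5 := lint_fubini (m+1) g hgmeas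
  have step6 := lint_norm m g hgmeas
  have hm1 : Measurable fun r : ℝ => ENNReal.ofReal ((a^2+b^2*r^2)⁻¹) :=
    (hcont.inv₀ (fun t => (hbase t).ne')).measurable.ennreal_ofReal
  have step7 : ∫⁻ r in Set.Ioi (0:ℝ), ENNReal.ofReal (r^m) * g r
      ≤ ENNReal.ofReal ((b⁻¹)^m) * ENNReal.ofReal (π/(2*a*b)) := by
    have hpt : ∀ r ∈ Set.Ioi (0:ℝ), ENNReal.ofReal (r^m) * g r
        ≤ ENNReal.ofReal ((b⁻¹)^m) * ENNReal.ofReal ((a^2+b^2*r^2)⁻¹) := by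
      intro r hr
      have hr' : 0 < r := hr
      rw [hgdef]
      simp only
      rw [← ENNReal.ofReal_mul (pow_nonneg hr'.le m), ← ENNReal.ofReal_mul (by positivity)]
      apply ENNReal.ofReal_le_ofReal
      apply ptwise_bound m hb hr'
      nlinarith [sq_nonneg a]
    calc ∫⁻ r in Set.Ioi (0:ℝ), ENNReal.ofReal (r^m) * g r
        ≤ ∫⁻ r in Set.Ioi (0:ℝ),
            ENNReal.ofReal ((b⁻¹)^m) * ENNReal.ofReal ((a^2+b^2*r^2)⁻¹) := by
          apply setLIntegral_mono
          · exact measurable_const.mul hm1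
          · exact hpt
      _ = ENNReal.ofReal ((b⁻¹)^m) * ∫⁻ r in Set.Ioi (0:ℝ),
            ENNReal.ofReal ((a^2+b^2*r^2)⁻¹) := by
          rw [lintegral_const_mul _ hm1]
      _ ≤ ENNReal.ofReal ((b⁻¹)^m) * ENNReal.ofReal (π/(2*a*b)) := by
          exact mul_le_mul_right (lint_one_dim a b ha hb) _
  calc ∫⁻ ω', h ω' ∂(volume : Measure (EuclideanSpace ℝ (Fin (m+2)))).toSphere
      = (((m+1:ℕ):ℝ≥0∞)+1) * ∫⁻ x in ball (0 : EuclideanSpace ℝ (Fin (m+2))) 1, H₀ x := step1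
    _ ≤ (((m+1:ℕ):ℝ≥0∞)+1) * ∫⁻ x : EuclideanSpace ℝ (Fin (m+2)) in
          {x : EuclideanSpace ℝ (Fin (m+2)) | x 0 ∈ Set.Ioo (-1:ℝ) 1},
          g (Real.sqrt (∑ i : Fin (m+1), (x i.succ)^2)) := by
        apply mul_le_mul_right
        rw [step2]
        exact le_trans step3 step4
    _ = (((m+1:ℕ):ℝ≥0∞)+1) * (ENNReal.ofReal 2 * (volume (ball (0 : EuclideanSpace ℝ (Fin (m+1))) 1)
          * ((m:ℝ≥0∞)+1) * ∫⁻ r in Set.Ioi (0:ℝ), ENNReal.ofReal (r^m) * g r)) := by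
        rw [step5, step6]
    _ ≤ (((m+1:ℕ):ℝ≥0∞)+1) * (ENNReal.ofReal 2 * (volume (ball (0 : EuclideanSpace ℝ (Fin (m+1))) 1)
          * ((m:ℝ≥0∞)+1) * (ENNReal.ofReal ((b⁻¹)^m) * ENNReal.ofReal (π/(2*a*b))))) := by
        apply mul_le_mul_right
        apply mul_le_mul_right
        exact mul_le_mul_right step7 _
    _ ≤ ENNReal.ofReal (((m:ℝ)+2) * 2
          * ((volume (ball (0 : EuclideanSpace ℝ (Fin (m+1))) 1)).toReal * ((m:ℝ)+1))
          * ((b⁻¹)^m * (π/(2*a*b)))) := by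
        have hVne : volume (ball (0 : EuclideanSpace ℝ (Fin (m+1))) 1) ≠ ⊤ :=
          measure_ball_lt_top.ne
        have hV : volume (ball (0 : EuclideanSpace ℝ (Fin (m+1))) 1)
            = ENNReal.ofReal ((volume (ball (0 : EuclideanSpace ℝ (Fin (m+1))) 1)).toReal) :=
          (ENNReal.ofReal_toReal hVne).symm
        rw [hV]
        rw [show (((m+1:ℕ):ℝ≥0∞)+1) = ENNReal.ofReal ((m:ℝ)+2) by
          rw [show ((m:ℝ)+2) = ((m+2:ℕ):ℝ) by push_cast; ring, ENNReal.ofReal_natCast]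
          push_cast; ring]
        rw [show ((m:ℝ≥0∞)+1) = ENNReal.ofReal ((m:ℝ)+1) by
          rw [ENNReal.ofReal_add (by positivity) (by norm_num)]; simp
        ]
        rw [← ENNReal.ofReal_mul (by positivity), ← ENNReal.ofReal_mul (by positivity),
          ← ENNReal.ofReal_mul (by positivity), ← ENNReal.ofReal_mul (by positivity),
          ← ENNReal.ofReal_mul (by positivity)]
        apply ENNReal.ofReal_le_ofReal
        rw [ENNReal.toReal_ofReal ENNReal.toReal_nonneg]
        apply le_of_eq
        ring

set_option maxHeartbeats 1000000 in
/-- For `d ≥ 2` and `r ≠ s` positive,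
`sup_{ω ∈ S^{d-1}} ∫_{S^{d-1}} |rω - sω'|^{-d} dω' ≤ C |r-s|⁻¹ (r²+s²)^{-(d-1)/2}`,
where the integral is with respect to the surface measure on the unit sphere. -/
theorem statement2 (d : ℕ) (hd : 2 ≤ d) :
    ∃ C : ℝ, 0 < C ∧ ∀ r s : ℝ, 0 < r → 0 < s → r ≠ s →
      ∀ ω : sphere (0 : EuclideanSpace ℝ (Fin d)) 1,
        ∫ ω' : sphere (0 : EuclideanSpace ℝ (Fin d)) 1,
            ‖r • (ω : EuclideanSpace ℝ (Fin d)) - s • (ω' : EuclideanSpace ℝ (Fin d))‖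
              ^ (-(d : ℝ)) ∂((volume : Measure (EuclideanSpace ℝ (Fin d))).toSphere)
          ≤ C * |r - s|⁻¹ * (r ^ 2 + s ^ 2) ^ (-((d : ℝ) - 1) / 2) := by
  obtain ⟨m, rfl⟩ : ∃ m, d = m + 2 := ⟨d - 2, by omega⟩
  clear hd
  set Vr := (volume (ball (0 : EuclideanSpace ℝ (Fin (m+1))) 1)).toReal with hVr
  have hVr0 : 0 ≤ Vr := ENNReal.toReal_nonneg
  set W := (((volume : Measure (EuclideanSpace ℝ (Fin (m+2)))).toSphere) Set.univ).toReal with hW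
  have hW0 : 0 ≤ W := ENNReal.toReal_nonneg
  set K₀ : ℝ := ((m:ℝ)+2) * 2 * (Vr * ((m:ℝ)+1)) with hK₀
  have hK₀0 : 0 ≤ K₀ := by positivity
  set C : ℝ := (K₀ * (π/2) * (4:ℝ) ^ (((m:ℝ)+1)/2) + W * (2:ℝ) ^ (((m:ℝ)+1)/2)) + 1 with hC
  have hC0 : 0 < C := by positivity
  refine ⟨C, hC0, ?_⟩
  intro r s hr hs hrs ω
  set a := |r - s| with ha'
  have ha : 0 < a := abs_pos.2 (sub_ne_zero.2 hrs)
  have hrs0 : 0 < r*s := mul_pos hr hs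
  set b := Real.sqrt (r*s) with hb'
  have hb : 0 < b := Real.sqrt_pos.2 hrs0
  have hb2 : b^2 = r*s := Real.sq_sqrt hrs0.le
  set q := r^2+s^2 with hq'
  have hq : 0 < q := by positivity
  -- rewrite the exponent on the RHS
  rw [show -((((m+2:ℕ)):ℝ) - 1) / 2 = -(((m:ℝ)+1))/2 by push_cast; ring]
  have hω1 : ‖(ω : EuclideanSpace ℝ (Fin (m+2)))‖ = 1 := mem_sphere_zero_iff_norm.1 ω.2
  have hnormsq : ∀ ω' : sphere (0 : EuclideanSpace ℝ (Fin (m+2))) 1,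
      ‖r • (ω : EuclideanSpace ℝ (Fin (m+2))) - s • (ω' : EuclideanSpace ℝ (Fin (m+2)))‖^2
        = a^2 + b^2 * ‖(ω : EuclideanSpace ℝ (Fin (m+2)))
            - (ω' : EuclideanSpace ℝ (Fin (m+2)))‖^2 := by
    intro ω'
    rw [norm_identity r s _ _ hω1 (mem_sphere_zero_iff_norm.1 ω'.2), ha', sq_abs, hb2]
  have hnormpos : ∀ ω' : sphere (0 : EuclideanSpace ℝ (Fin (m+2))) 1,
      0 < ‖r • (ω : EuclideanSpace ℝ (Fin (m+2))) - s • (ω' : EuclideanSpace ℝ (Fin (m+2)))‖ := by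
    intro ω'
    have h2 : 0 < ‖r • (ω : EuclideanSpace ℝ (Fin (m+2)))
        - s • (ω' : EuclideanSpace ℝ (Fin (m+2)))‖^2 := by
      rw [hnormsq ω']; positivity
    nlinarith [norm_nonneg (r • (ω : EuclideanSpace ℝ (Fin (m+2)))
      - s • (ω' : EuclideanSpace ℝ (Fin (m+2))))]
  have hfc : Continuous fun ω' : sphere (0 : EuclideanSpace ℝ (Fin (m+2))) 1 =>
      ‖r • (ω : EuclideanSpace ℝ (Fin (m+2))) - s • (ω' : EuclideanSpace ℝ (Fin (m+2)))‖
        ^ (-(((m+2:ℕ)):ℝ)) := by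
    apply Continuous.rpow_const
    · exact (continuous_const.sub (continuous_subtype_val.const_smul s)).norm
    · intro ω'; exact Or.inl (hnormpos ω').ne'
  have hfnn : ∀ ω' : sphere (0 : EuclideanSpace ℝ (Fin (m+2))) 1,
      0 ≤ ‖r • (ω : EuclideanSpace ℝ (Fin (m+2))) - s • (ω' : EuclideanSpace ℝ (Fin (m+2)))‖
        ^ (-(((m+2:ℕ)):ℝ)) :=
    fun ω' => Real.rpow_nonneg (norm_nonneg _) _
  have hexp : -(((m:ℝ)+1))/2 ≤ 0 := by
    have : (0:ℝ) ≤ (m:ℝ)+1 := by positivity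
    linarith
  by_cases hcase : q ≤ 4*(r*s)
  · -- comparable case
    rw [integral_eq_lintegral_of_nonneg_ae (ae_of_all _ hfnn)
      hfc.measurable.aestronglyMeasurable]
    have heq : ∀ ω' : sphere (0 : EuclideanSpace ℝ (Fin (m+2))) 1,
        ENNReal.ofReal (‖r • (ω : EuclideanSpace ℝ (Fin (m+2)))
            - s • (ω' : EuclideanSpace ℝ (Fin (m+2)))‖ ^ (-(((m+2:ℕ)):ℝ)))
          = ENNReal.ofReal ((a^2 + b^2 * ‖(ω : EuclideanSpace ℝ (Fin (m+2)))
              - (ω' : EuclideanSpace ℝ (Fin (m+2)))‖^2) ^ (-((m:ℝ)+2)/2)) := by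
      intro ω'
      congr 1
      rw [← hnormsq ω']
      rw [← Real.rpow_natCast (‖r • (ω : EuclideanSpace ℝ (Fin (m+2)))
        - s • (ω' : EuclideanSpace ℝ (Fin (m+2)))‖) 2, ← Real.rpow_mul (norm_nonneg _)]
      congr 1
      push_cast; ring
    rw [lintegral_congr heq]
    have hcore := core_bound m a b ha hb ω
    have hbpow : (b^(m+1))⁻¹ = (r*s) ^ (-(((m:ℝ)+1))/2) := by
      rw [hb', Real.sqrt_eq_rpow, ← Real.rpow_natCast ((r*s) ^ ((1:ℝ)/2)) (m+1),
        ← Real.rpow_mul hrs0.le, ← Real.rpow_neg hrs0.le]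
      congr 1
      push_cast; ring
    have hmono : (r*s) ^ (-(((m:ℝ)+1))/2) ≤ (q/4) ^ (-(((m:ℝ)+1))/2) :=
      Real.rpow_le_rpow_of_nonpos (by positivity) (by linarith) hexp
    have hinv4 : ((4:ℝ) ^ (-(((m:ℝ)+1))/2))⁻¹ = (4:ℝ) ^ (((m:ℝ)+1)/2) := by
      rw [show -(((m:ℝ)+1))/2 = -((((m:ℝ)+1))/2) by ring,
        Real.rpow_neg (by norm_num : (0:ℝ) ≤ 4), inv_inv]
    have hq4 : (q/4) ^ (-(((m:ℝ)+1))/2)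
        = q ^ (-(((m:ℝ)+1))/2) * (4:ℝ) ^ (((m:ℝ)+1)/2) := by
      rw [Real.div_rpow hq.le (by norm_num : (0:ℝ) ≤ 4), div_eq_mul_inv, hinv4]
    calc (∫⁻ ω' : sphere (0 : EuclideanSpace ℝ (Fin (m+2))) 1,
            ENNReal.ofReal ((a^2 + b^2 * ‖(ω : EuclideanSpace ℝ (Fin (m+2)))
              - (ω' : EuclideanSpace ℝ (Fin (m+2)))‖^2) ^ (-((m:ℝ)+2)/2))
            ∂(volume : Measure (EuclideanSpace ℝ (Fin (m+2)))).toSphere).toReal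
        ≤ ((m:ℝ)+2) * 2 * (Vr * ((m:ℝ)+1)) * ((b⁻¹)^m * (π/(2*a*b))) :=
          ENNReal.toReal_le_of_le_ofReal (by positivity) hcore
      _ = (K₀*(π/2)) * (a⁻¹ * (b^(m+1))⁻¹) := by
          rw [hK₀, inv_pow, pow_succ, mul_inv, div_eq_mul_inv, div_eq_mul_inv,
            mul_inv, mul_inv]
          ring
      _ = (K₀*(π/2)) * (a⁻¹ * (r*s) ^ (-(((m:ℝ)+1))/2)) := by rw [hbpow]
      _ ≤ (K₀*(π/2)) * (a⁻¹ * (q ^ (-(((m:ℝ)+1))/2) * (4:ℝ) ^ (((m:ℝ)+1)/2))) := by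
          apply mul_le_mul_of_nonneg_left _ (by positivity)
          apply mul_le_mul_of_nonneg_left _ (by positivity)
          rw [← hq4]; exact hmono
      _ ≤ C * a⁻¹ * q ^ (-(((m:ℝ)+1))/2) := by
          have h4 : (0:ℝ) < (4:ℝ) ^ (((m:ℝ)+1)/2) := by positivity
          have h2' : (0:ℝ) ≤ W * (2:ℝ) ^ (((m:ℝ)+1)/2) := by positivity
          have hKC : K₀*(π/2) * (4:ℝ) ^ (((m:ℝ)+1)/2) ≤ C := by
            rw [hC]; linarith [h2']
          calc (K₀*(π/2)) * (a⁻¹ * (q ^ (-(((m:ℝ)+1))/2) * (4:ℝ) ^ (((m:ℝ)+1)/2)))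
              = (K₀*(π/2) * (4:ℝ) ^ (((m:ℝ)+1)/2)) * (a⁻¹ * q ^ (-(((m:ℝ)+1))/2)) := by
                ring
            _ ≤ C * (a⁻¹ * q ^ (-(((m:ℝ)+1))/2)) := by
                apply mul_le_mul_of_nonneg_right hKC (by positivity)
            _ = C * a⁻¹ * q ^ (-(((m:ℝ)+1))/2) := by ring
  · -- separated case
    have hcase' : 4*(r*s) < q := lt_of_not_ge hcase
    have hsq : Real.sqrt (q/2) ≤ a := by
      have ha2 : q/2 ≤ a^2 := by
        rw [ha', sq_abs]
        nlinarith
      calc Real.sqrt (q/2) ≤ Real.sqrt (a^2) := Real.sqrt_le_sqrt ha2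
        _ = a := Real.sqrt_sq ha.le
    have hptw : ∀ ω' : sphere (0 : EuclideanSpace ℝ (Fin (m+2))) 1,
        ‖r • (ω : EuclideanSpace ℝ (Fin (m+2))) - s • (ω' : EuclideanSpace ℝ (Fin (m+2)))‖
            ^ (-(((m+2:ℕ)):ℝ)) ≤ a ^ (-(((m+2:ℕ)):ℝ)) := by
      intro ω'
      apply Real.rpow_le_rpow_of_nonpos ha _ (by
        have : (0:ℝ) ≤ ((m+2:ℕ):ℝ) := by positivity
        linarith)
      have hb2t : 0 ≤ b^2 * ‖(ω : EuclideanSpace ℝ (Fin (m+2)))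
          - (ω' : EuclideanSpace ℝ (Fin (m+2)))‖^2 := by positivity
      have h2 : a^2 ≤ ‖r • (ω : EuclideanSpace ℝ (Fin (m+2)))
          - s • (ω' : EuclideanSpace ℝ (Fin (m+2)))‖^2 := by
        rw [hnormsq ω']; linarith
      calc a = Real.sqrt (a^2) := (Real.sqrt_sq ha.le).symm
        _ ≤ Real.sqrt (‖r • (ω : EuclideanSpace ℝ (Fin (m+2)))
            - s • (ω' : EuclideanSpace ℝ (Fin (m+2)))‖^2) := Real.sqrt_le_sqrt h2
        _ = ‖r • (ω : EuclideanSpace ℝ (Fin (m+2)))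
            - s • (ω' : EuclideanSpace ℝ (Fin (m+2)))‖ := Real.sqrt_sq (norm_nonneg _)
    have hint : Integrable (fun ω' : sphere (0 : EuclideanSpace ℝ (Fin (m+2))) 1 =>
        ‖r • (ω : EuclideanSpace ℝ (Fin (m+2))) - s • (ω' : EuclideanSpace ℝ (Fin (m+2)))‖
          ^ (-(((m+2:ℕ)):ℝ)))
        ((volume : Measure (EuclideanSpace ℝ (Fin (m+2)))).toSphere) := by
      apply Integrable.mono' (integrable_const (a ^ (-(((m+2:ℕ)):ℝ))))
        hfc.measurable.aestronglyMeasurable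
      apply ae_of_all
      intro ω'
      rw [Real.norm_eq_abs, abs_of_nonneg (hfnn ω')]
      exact hptw ω'
    have hapow : a ^ (-(((m+2:ℕ)):ℝ))
        ≤ a⁻¹ * (q ^ (-(((m:ℝ)+1))/2) * (2:ℝ) ^ (((m:ℝ)+1)/2)) := by
      have e1 : a ^ (-(((m+2:ℕ)):ℝ)) = a⁻¹ * a ^ (-(((m:ℝ)+1))) := by
        rw [show -(((m+2:ℕ)):ℝ) = (-1) + (-(((m:ℝ)+1))) by push_cast; ring,
          Real.rpow_add ha, Real.rpow_neg_one]
      have e2 : a ^ (-(((m:ℝ)+1))) ≤ (Real.sqrt (q/2)) ^ (-(((m:ℝ)+1))) :=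
        Real.rpow_le_rpow_of_nonpos (Real.sqrt_pos.2 (by positivity)) hsq
          (neg_nonpos.2 (by positivity))
      have e3 : (Real.sqrt (q/2)) ^ (-(((m:ℝ)+1))) = (q/2) ^ (-(((m:ℝ)+1))/2) := by
        rw [Real.sqrt_eq_rpow, ← Real.rpow_mul (by positivity : (0:ℝ) ≤ q/2)]
        congr 1
        ring
      have hinv2 : ((2:ℝ) ^ (-(((m:ℝ)+1))/2))⁻¹ = (2:ℝ) ^ (((m:ℝ)+1)/2) := by
        rw [show -(((m:ℝ)+1))/2 = -((((m:ℝ)+1))/2) by ring,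
          Real.rpow_neg (by norm_num : (0:ℝ) ≤ 2), inv_inv]
      have e4 : (q/2) ^ (-(((m:ℝ)+1))/2)
          = q ^ (-(((m:ℝ)+1))/2) * (2:ℝ) ^ (((m:ℝ)+1)/2) := by
        rw [Real.div_rpow hq.le (by norm_num : (0:ℝ) ≤ 2), div_eq_mul_inv, hinv2]
      calc a ^ (-(((m+2:ℕ)):ℝ)) = a⁻¹ * a ^ (-(((m:ℝ)+1))) := e1
        _ ≤ a⁻¹ * (q ^ (-(((m:ℝ)+1))/2) * (2:ℝ) ^ (((m:ℝ)+1)/2)) := by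
            apply mul_le_mul_of_nonneg_left _ (by positivity)
            rw [← e4]
            exact e2.trans (le_of_eq e3)
    calc ∫ ω' : sphere (0 : EuclideanSpace ℝ (Fin (m+2))) 1,
            ‖r • (ω : EuclideanSpace ℝ (Fin (m+2))) - s • (ω' : EuclideanSpace ℝ (Fin (m+2)))‖
              ^ (-(((m+2:ℕ)):ℝ)) ∂((volume : Measure (EuclideanSpace ℝ (Fin (m+2)))).toSphere)
        ≤ ∫ _ω' : sphere (0 : EuclideanSpace ℝ (Fin (m+2))) 1,
            a ^ (-(((m+2:ℕ)):ℝ)) ∂((volume : Measure (EuclideanSpace ℝ (Fin (m+2)))).toSphere) :=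
          integral_mono hint (integrable_const _) hptw
      _ = W * a ^ (-(((m+2:ℕ)):ℝ)) := by
          rw [integral_const, smul_eq_mul, hW, measureReal_def]
      _ ≤ W * (a⁻¹ * (q ^ (-(((m:ℝ)+1))/2) * (2:ℝ) ^ (((m:ℝ)+1)/2))) :=
          mul_le_mul_of_nonneg_left hapow hW0
      _ ≤ C * a⁻¹ * q ^ (-(((m:ℝ)+1))/2) := by
          have hKC : W * (2:ℝ) ^ (((m:ℝ)+1)/2) ≤ C := by
            have h4 : (0:ℝ) ≤ K₀ * (π/2) * (4:ℝ) ^ (((m:ℝ)+1)/2) := by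
              apply mul_nonneg (mul_nonneg hK₀0 (by positivity))
              positivity
            rw [hC]; linarith
          calc W * (a⁻¹ * (q ^ (-(((m:ℝ)+1))/2) * (2:ℝ) ^ (((m:ℝ)+1)/2)))
              = (W * (2:ℝ) ^ (((m:ℝ)+1)/2)) * (a⁻¹ * q ^ (-(((m:ℝ)+1))/2)) := by ring
            _ ≤ C * (a⁻¹ * q ^ (-(((m:ℝ)+1))/2)) :=
                mul_le_mul_of_nonneg_right hKC (by positivity)
            _ = C * a⁻¹ * q ^ (-(((m:ℝ)+1))/2) := by ring
end

section
/- For d ≥ 2 and r, s > 0 with r ≠ s, ∫₀^π (r² + s² - 2rs cos θ)^{-d/2} (sin θ)^{d-2} dθ ≤ C |r-s|^{-1} (r² + s²)^{-(d-1)/2} for a constant C depending only on d. -/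
open MeasureTheory Set Real


lemma key_aux (d : ℕ) (hd : 2 ≤ d) {ε c : ℝ} (hε : 0 < ε) (hc : 0 < c) :
    IntegrableOn (fun θ : ℝ => (ε ^ 2 + c * θ ^ 2) ^ (-(d : ℝ) / 2) * θ ^ (d - 2 : ℕ)) (Ioi 0) ∧
    ∫ θ in Ioi (0:ℝ), (ε ^ 2 + c * θ ^ 2) ^ (-(d : ℝ) / 2) * θ ^ (d - 2 : ℕ)
      ≤ 2 * ε⁻¹ * c ^ (-((d : ℝ) - 1) / 2) := by
  set h : ℝ → ℝ := fun θ : ℝ => (ε ^ 2 + c * θ ^ 2) ^ (-(d : ℝ) / 2) * θ ^ (d - 2 : ℕ) with hh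
  set θ₀ : ℝ := ε / Real.sqrt c with hθ₀
  have hsc : 0 < Real.sqrt c := Real.sqrt_pos.mpr hc
  have hθ₀pos : 0 < θ₀ := div_pos hε hsc
  have hbase : ∀ θ : ℝ, 0 < ε ^ 2 + c * θ ^ 2 := fun θ => by positivity
  have hcont : Continuous h := by
    apply Continuous.mul
    · apply Continuous.rpow_const (by continuity)
      intro x; exact Or.inl (hbase x).ne'
    · exact continuous_pow _
  have hnonneg : ∀ θ : ℝ, 0 ≤ θ → 0 ≤ h θ := by
    intro θ hθ
    apply mul_nonneg (Real.rpow_nonneg (hbase θ).le _) (pow_nonneg hθ _)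
  -- integrability on the two pieces
  have hint1 : IntegrableOn h (Ioc 0 θ₀) := hcont.integrableOn_Ioc
  have hbound2 : ∀ θ ∈ Ioi θ₀, h θ ≤ c ^ (-(d:ℝ)/2) * θ ^ (-(2:ℝ)) := by
    intro θ hθ
    have hθpos : 0 < θ := hθ₀pos.trans hθ
    have h1 : (ε ^ 2 + c * θ ^ 2) ^ (-(d : ℝ) / 2) ≤ (c * θ ^ 2) ^ (-(d : ℝ) / 2) := by
      apply Real.rpow_le_rpow_of_nonpos (by positivity) (by nlinarith [sq_nonneg ε])
      have : (0:ℝ) ≤ (d:ℝ) := by positivity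
      linarith
    calc h θ ≤ (c * θ ^ 2) ^ (-(d : ℝ) / 2) * θ ^ (d - 2 : ℕ) := by
          apply mul_le_mul_of_nonneg_right h1 (pow_nonneg hθpos.le _)
      _ = c ^ (-(d:ℝ)/2) * θ ^ (-(2:ℝ)) := by
          rw [Real.mul_rpow hc.le (by positivity), mul_assoc]
          congr 1
          rw [← Real.rpow_natCast θ (d-2), ← Real.rpow_natCast θ 2,
            ← Real.rpow_mul hθpos.le, ← Real.rpow_add hθpos]
          congr 1
          have : ((d - 2 : ℕ) : ℝ) = (d : ℝ) - 2 := by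
            push_cast [Nat.cast_sub hd]; ring
          rw [this]; push_cast; ring
  have hint2 : IntegrableOn h (Ioi θ₀) := by
    apply Integrable.mono' (g := fun θ => c ^ (-(d:ℝ)/2) * θ ^ (-(2:ℝ)))
    · exact (integrableOn_Ioi_rpow_of_lt (by norm_num) hθ₀pos).const_mul _
    · exact hcont.aestronglyMeasurable.restrict
    · filter_upwards [ae_restrict_mem measurableSet_Ioi] with θ hθ
      rw [Real.norm_eq_abs, abs_of_nonneg (hnonneg θ (hθ₀pos.trans hθ).le)]
      exact hbound2 θ hθ
  have hsplit : Ioc (0:ℝ) θ₀ ∪ Ioi θ₀ = Ioi 0 := Ioc_union_Ioi_eq_Ioi hθ₀pos.le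
  have hint : IntegrableOn h (Ioi 0) := by
    rw [← hsplit]; exact hint1.union hint2
  refine ⟨hint, ?_⟩
  have hτ : ((√c) : ℝ) ^ (d - 1 : ℕ) = c ^ (((d:ℝ) - 1) / 2) := by
    rw [Real.sqrt_eq_rpow, ← Real.rpow_natCast (c ^ ((1:ℝ)/2)) (d-1), ← Real.rpow_mul hc.le]
    congr 1
    have : ((d - 1 : ℕ) : ℝ) = (d : ℝ) - 1 := by
      push_cast [Nat.cast_sub (by omega : 1 ≤ d)]; ring
    rw [this]; ring
  have key1 : ∫ θ in Ioc (0:ℝ) θ₀, h θ ≤ ε⁻¹ * c ^ (-((d : ℝ) - 1) / 2) := by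
    have step : ∫ θ in Ioc (0:ℝ) θ₀, h θ ≤ ∫ θ in Ioc (0:ℝ) θ₀, (ε^2) ^ (-(d:ℝ)/2) * θ ^ (d - 2 : ℕ) := by
      apply setIntegral_mono_on hint1
      · exact (Continuous.integrableOn_Ioc (by continuity))
      · exact measurableSet_Ioc
      · intro θ hθ
        apply mul_le_mul_of_nonneg_right _ (pow_nonneg hθ.1.le _)
        apply Real.rpow_le_rpow_of_nonpos (by positivity) (by nlinarith [sq_nonneg θ, hθ.1.le])
        have : (0:ℝ) ≤ (d:ℝ) := by positivity
        linarith
    have comp : ∫ θ in Ioc (0:ℝ) θ₀, (ε^2) ^ (-(d:ℝ)/2) * θ ^ (d - 2 : ℕ)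
        = (ε^2) ^ (-(d:ℝ)/2) * (θ₀ ^ (d - 1 : ℕ) / (d - 1 : ℕ)) := by
      rw [MeasureTheory.integral_const_mul, ← intervalIntegral.integral_of_le hθ₀pos.le,
        integral_pow]
      have : d - 2 + 1 = d - 1 := by omega
      rw [this]
      have h20 : ((d - 2 : ℕ):ℝ) + 1 = ((d - 1 : ℕ):ℝ) := by
        push_cast [Nat.cast_sub hd, Nat.cast_sub (by omega : 1 ≤ d)]; ring
      rw [zero_pow (by omega : d - 1 ≠ 0), sub_zero, h20]
    refine step.trans (comp.le.trans ?_)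
    have hA : (ε^2) ^ (-(d:ℝ)/2) = ε ^ (-(d:ℝ)) := by
      rw [← Real.rpow_natCast ε 2, ← Real.rpow_mul hε.le]
      congr 1
      push_cast; ring
    have hθ₀pow : θ₀ ^ (d - 1 : ℕ) = ε ^ (d - 1 : ℕ) / c ^ (((d:ℝ) - 1) / 2) := by
      rw [hθ₀, div_pow, hτ]
    have hεmul : ε ^ (-(d:ℝ)) * ε ^ (d - 1 : ℕ) = ε⁻¹ := by
      rw [← Real.rpow_natCast ε (d-1), ← Real.rpow_add hε]
      have : ((d - 1 : ℕ) : ℝ) = (d : ℝ) - 1 := by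
        push_cast [Nat.cast_sub (by omega : 1 ≤ d)]; ring
      rw [this]
      rw [show -(d:ℝ) + ((d:ℝ) - 1) = -1 by ring, Real.rpow_neg_one]
    have hcneg : c ^ (-((d:ℝ) - 1) / 2) = (c ^ (((d:ℝ) - 1) / 2))⁻¹ := by
      rw [neg_div, Real.rpow_neg hc.le]
    rw [hA, hθ₀pow, hcneg]
    have hcp : 0 < c ^ (((d:ℝ) - 1) / 2) := Real.rpow_pos_of_pos hc _
    rw [show ε ^ (-(d:ℝ)) * (ε ^ (d - 1 : ℕ) / c ^ (((d:ℝ) - 1) / 2) / ((d - 1 : ℕ):ℝ))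
        = (ε ^ (-(d:ℝ)) * ε ^ (d - 1 : ℕ)) * (c ^ (((d:ℝ) - 1) / 2))⁻¹ / ((d - 1 : ℕ):ℝ) by ring,
      hεmul]
    apply div_le_self (by positivity)
    have : 1 ≤ d - 1 := by omega
    exact_mod_cast this
  have key2 : ∫ θ in Ioi θ₀, h θ ≤ ε⁻¹ * c ^ (-((d : ℝ) - 1) / 2) := by
    have step : ∫ θ in Ioi θ₀, h θ ≤ ∫ θ in Ioi θ₀, c ^ (-(d:ℝ)/2) * θ ^ (-(2:ℝ)) := by
      apply setIntegral_mono_on hint2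
      · exact (integrableOn_Ioi_rpow_of_lt (by norm_num) hθ₀pos).const_mul _
      · exact measurableSet_Ioi
      · exact hbound2
    refine step.trans ?_
    rw [MeasureTheory.integral_const_mul, integral_Ioi_rpow_of_lt (by norm_num) hθ₀pos]
    rw [show -θ₀ ^ (-(2:ℝ) + 1) / (-(2:ℝ) + 1) = θ₀ ^ (-(1:ℝ)) by norm_num]
    rw [Real.rpow_neg_one, hθ₀, ← one_div, one_div_div]
    apply le_of_eq
    rw [Real.sqrt_eq_rpow,
      show c ^ (-(d:ℝ)/2) * (c ^ ((1:ℝ)/2) / ε) = ε⁻¹ * (c ^ (-(d:ℝ)/2) * c ^ ((1:ℝ)/2)) by ring,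
      ← Real.rpow_add hc]
    congr 1
    ring
  have hsum : ∫ θ in Ioi (0:ℝ), h θ = (∫ θ in Ioc (0:ℝ) θ₀, h θ) + ∫ θ in Ioi θ₀, h θ := by
    rw [← hsplit, setIntegral_union (Ioc_disjoint_Ioi le_rfl) measurableSet_Ioi hint1 hint2]
  rw [hh] at hsum ⊢
  rw [hsum]
  linarith

set_option maxHeartbeats 1000000 in
/-- For `d ≥ 2` and `r, s > 0` with `r ≠ s`,
`∫₀^π (r² + s² - 2rs cos θ)^(-d/2) (sin θ)^(d-2) dθ ≤ C |r-s|⁻¹ (r²+s²)^(-(d-1)/2)`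
with `C` depending only on `d`. -/
theorem statement3 (d : ℕ) (hd : 2 ≤ d) :
    ∃ C : ℝ, 0 < C ∧ ∀ r s : ℝ, 0 < r → 0 < s → r ≠ s →
      ∫ θ in Ioo (0:ℝ) π,
          (r ^ 2 + s ^ 2 - 2 * r * s * Real.cos θ) ^ (-(d : ℝ) / 2) * Real.sin θ ^ (d - 2 : ℕ)
        ≤ C * |r - s|⁻¹ * (r ^ 2 + s ^ 2) ^ (-((d : ℝ) - 1) / 2) := by
  have hπ := Real.pi_pos
  refine ⟨2 * π ^ (d - 1 : ℕ) + π * 2 ^ ((d:ℝ)/2), by positivity, ?_⟩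
  intro r s hr hs hrs
  set A := r ^ 2 + s ^ 2 with hA
  have hApos : 0 < A := by positivity
  set ε := |r - s| with hεdef
  have hεpos : 0 < ε := abs_pos.mpr (sub_ne_zero.mpr hrs)
  have hε2 : ε ^ 2 = A - 2 * r * s := by rw [hεdef, sq_abs, hA]; ring
  have hε2lt : ε ^ 2 < A := by nlinarith
  have hbase : ∀ θ : ℝ, ε ^ 2 ≤ A - 2 * r * s * Real.cos θ := by
    intro θ
    have := Real.cos_le_one θ
    nlinarith
  have hbasepos : ∀ θ : ℝ, 0 < A - 2 * r * s * Real.cos θ := fun θ =>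
    lt_of_lt_of_le (by positivity) (hbase θ)
  set F : ℝ → ℝ := fun θ => (A - 2 * r * s * Real.cos θ) ^ (-(d:ℝ)/2) * Real.sin θ ^ (d - 2 : ℕ)
    with hF
  have hFcont : Continuous F := by
    apply Continuous.mul
    · apply Continuous.rpow_const (by continuity)
      intro θ; exact Or.inl (hbasepos θ).ne'
    · exact (Real.continuous_sin).pow _
  have hFint : IntegrableOn F (Ioo 0 π) := by
    apply (hFcont.integrableOn_Ioc (a := 0) (b := π)).mono_set Ioo_subset_Ioc_self
  have hRHSpos : 0 < ε⁻¹ * A ^ (-((d:ℝ)-1)/2) := by positivity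
  have hεA : A ^ (-(1:ℝ)/2) ≤ ε⁻¹ := by
    have hsq : ε ≤ Real.sqrt A := by
      rw [show ε = Real.sqrt (ε ^ 2) by rw [Real.sqrt_sq hεpos.le]]
      exact Real.sqrt_le_sqrt hε2lt.le
    have h1 : A ^ (-(1:ℝ)/2) = (Real.sqrt A)⁻¹ := by
      rw [Real.sqrt_eq_rpow, ← Real.rpow_neg hApos.le]
      congr 1; ring
    rw [h1]
    exact inv_anti₀ hεpos hsq
  by_cases hcase : A ≤ 2 * ε ^ 2
  · -- r, s far apart: crude constant bound
    have hpt : ∀ θ ∈ Ioo (0:ℝ) π, F θ ≤ (A/2) ^ (-(d:ℝ)/2) := by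
      intro θ hθ
      have hsin0 : 0 ≤ Real.sin θ := Real.sin_nonneg_of_nonneg_of_le_pi hθ.1.le hθ.2.le
      have h1 : (A - 2 * r * s * Real.cos θ) ^ (-(d:ℝ)/2) ≤ (A/2) ^ (-(d:ℝ)/2) := by
        apply Real.rpow_le_rpow_of_nonpos (by positivity)
          (le_trans (by linarith) (hbase θ))
        have : (0:ℝ) ≤ (d:ℝ) := by positivity
        linarith
      calc F θ ≤ (A - 2 * r * s * Real.cos θ) ^ (-(d:ℝ)/2) * 1 := by
            apply mul_le_mul_of_nonneg_left _ (Real.rpow_nonneg (hbasepos θ).le _)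
            exact pow_le_one₀ hsin0 (Real.sin_le_one θ)
        _ ≤ (A/2) ^ (-(d:ℝ)/2) := by rw [mul_one]; exact h1
    have hstep : ∫ θ in Ioo (0:ℝ) π, F θ ≤ π * (A/2) ^ (-(d:ℝ)/2) := by
      have := setIntegral_mono_on hFint (integrableOn_const
        (by rw [Real.volume_Ioo]; exact ENNReal.ofReal_ne_top))
        measurableSet_Ioo hpt
      rw [setIntegral_const, Real.volume_real_Ioo_of_le hπ.le, smul_eq_mul] at this
      refine this.trans (le_of_eq ?_)
      ring_nf
    refine hstep.trans ?_
    have hsplitpow : (A/2) ^ (-(d:ℝ)/2) = 2 ^ ((d:ℝ)/2) * (A ^ (-(1:ℝ)/2) * A ^ (-((d:ℝ)-1)/2)) := by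
      rw [Real.div_rpow hApos.le (by norm_num), ← Real.rpow_add hApos,
        show -(1:ℝ)/2 + -((d:ℝ)-1)/2 = -(d:ℝ)/2 by ring, div_eq_mul_inv,
        ← Real.rpow_neg (by norm_num : (0:ℝ) ≤ 2)]
      ring
    rw [hsplitpow]
    have h2 : π * (2 ^ ((d:ℝ)/2) * (A ^ (-(1:ℝ)/2) * A ^ (-((d:ℝ)-1)/2)))
        ≤ π * 2 ^ ((d:ℝ)/2) * (ε⁻¹ * A ^ (-((d:ℝ)-1)/2)) := by
      rw [show π * (2 ^ ((d:ℝ)/2) * (A ^ (-(1:ℝ)/2) * A ^ (-((d:ℝ)-1)/2)))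
          = π * 2 ^ ((d:ℝ)/2) * (A ^ (-(1:ℝ)/2) * A ^ (-((d:ℝ)-1)/2)) by ring]
      apply mul_le_mul_of_nonneg_left _ (by positivity)
      exact mul_le_mul_of_nonneg_right hεA (Real.rpow_nonneg hApos.le _)
    refine h2.trans ?_
    have hpos1 : (0:ℝ) ≤ 2 * π ^ (d - 1 : ℕ) * (ε⁻¹ * A ^ (-((d:ℝ)-1)/2)) := by positivity
    nlinarith [hRHSpos]
  · -- r, s comparable: use the key lemma with c = A / π²
    push_neg at hcase
    set c : ℝ := A / π ^ 2 with hc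
    have hcpos : 0 < c := by positivity
    obtain ⟨hint, hbound⟩ := key_aux d hd hεpos hcpos
    set h : ℝ → ℝ := fun θ : ℝ => (ε ^ 2 + c * θ ^ 2) ^ (-(d : ℝ) / 2) * θ ^ (d - 2 : ℕ) with hhdef
    have hpt : ∀ θ ∈ Ioo (0:ℝ) π, F θ ≤ h θ := by
      intro θ hθ
      have hsin0 : 0 ≤ Real.sin θ := Real.sin_nonneg_of_nonneg_of_le_pi hθ.1.le hθ.2.le
      have hcos : Real.cos θ ≤ 1 - 2 / π ^ 2 * θ ^ 2 :=
        Real.cos_le_one_sub_mul_cos_sq (by rw [abs_of_nonneg hθ.1.le]; exact hθ.2.le)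
      have hbase2 : ε ^ 2 + c * θ ^ 2 ≤ A - 2 * r * s * Real.cos θ := by
        have h2rs : A / 2 ≤ 2 * r * s := by nlinarith
        have hθ2 : 0 ≤ θ ^ 2 := sq_nonneg θ
        have hrs' : 0 < 2 * r * s := by positivity
        have hq : 2 / π ^ 2 * θ ^ 2 ≤ 1 - Real.cos θ := by linarith
        have : c * θ ^ 2 ≤ 2 * r * s * (1 - Real.cos θ) := by
          calc c * θ ^ 2 = (A / 2) * (2 / π ^ 2 * θ ^ 2) := by
                rw [hc]; field_simp
            _ ≤ 2 * r * s * (1 - Real.cos θ) := by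
                apply mul_le_mul h2rs hq (by positivity) hrs'.le
        nlinarith
      have h1 : (A - 2 * r * s * Real.cos θ) ^ (-(d:ℝ)/2) ≤ (ε ^ 2 + c * θ ^ 2) ^ (-(d:ℝ)/2) := by
        apply Real.rpow_le_rpow_of_nonpos (by positivity) hbase2
        have : (0:ℝ) ≤ (d:ℝ) := by positivity
        linarith
      calc F θ ≤ (A - 2 * r * s * Real.cos θ) ^ (-(d:ℝ)/2) * θ ^ (d - 2 : ℕ) := by
            apply mul_le_mul_of_nonneg_left _ (Real.rpow_nonneg (hbasepos θ).le _)
            exact pow_le_pow_left₀ hsin0 (Real.sin_le hθ.1.le) _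
        _ ≤ h θ := by
            apply mul_le_mul_of_nonneg_right h1 (pow_nonneg hθ.1.le _)
    have hstep1 : ∫ θ in Ioo (0:ℝ) π, F θ ≤ ∫ θ in Ioo (0:ℝ) π, h θ :=
      setIntegral_mono_on hFint (hint.mono_set Ioo_subset_Ioi_self) measurableSet_Ioo hpt
    have hstep2 : ∫ θ in Ioo (0:ℝ) π, h θ ≤ ∫ θ in Ioi (0:ℝ), h θ := by
      have hnn : 0 ≤ᵐ[volume.restrict (Ioi (0:ℝ))] h := by
        filter_upwards [ae_restrict_mem measurableSet_Ioi] with θ hθ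
        exact mul_nonneg (Real.rpow_nonneg
          (add_nonneg (sq_nonneg ε) (mul_nonneg hcpos.le (sq_nonneg θ))) _)
          (pow_nonneg (le_of_lt hθ) _)
      exact setIntegral_mono_set hint hnn
        (HasSubset.Subset.eventuallyLE Ioo_subset_Ioi_self)
    have hπpow : ((π:ℝ) ^ 2) ^ (((d:ℝ)-1)/2) = π ^ (d - 1 : ℕ) := by
      rw [← Real.rpow_natCast π 2, ← Real.rpow_mul Real.pi_pos.le,
        ← Real.rpow_natCast π (d - 1)]
      congr 1
      push_cast [Nat.cast_sub (by omega : 1 ≤ d)]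
      ring
    have hcbound : c ^ (-((d:ℝ)-1)/2) = π ^ (d - 1 : ℕ) * A ^ (-((d:ℝ)-1)/2) := by
      rw [hc, Real.div_rpow hApos.le (by positivity), div_eq_mul_inv,
        ← Real.rpow_neg (by positivity : (0:ℝ) ≤ π ^ 2),
        show -(-((d:ℝ)-1)/2) = ((d:ℝ)-1)/2 by ring, hπpow]
      ring
    calc ∫ θ in Ioo (0:ℝ) π, F θ ≤ ∫ θ in Ioi (0:ℝ), h θ := hstep1.trans hstep2
      _ ≤ 2 * ε⁻¹ * c ^ (-((d:ℝ)-1)/2) := hbound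
      _ ≤ (2 * π ^ (d - 1 : ℕ) + π * 2 ^ ((d:ℝ)/2)) * ε⁻¹ * A ^ (-((d:ℝ)-1)/2) := by
          rw [hcbound]
          have hpos2 : (0:ℝ) ≤ π * 2 ^ ((d:ℝ)/2) * (ε⁻¹ * A ^ (-((d:ℝ)-1)/2)) := by positivity
          nlinarith [hRHSpos]
end

section
/- Let P and Q be bigraded solid harmonics of bidegrees (m,n) and (m',n') on ℂ^d. Then for z = rζ with r > 0, ζ ∈ S^{2d-1}: ⟨∇^z P(z), ∇^z Q(z)⟩ = (1/r²)⟨∇₀^z P(z), ∇₀^z Q(z)⟩ + (1/(4r²))((3m+n)m' + (m-n)n') P(z) conj(Q(z)). -/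
open Complex MvPolynomial

/-- The ambient partial derivative `D_i F` on `ℝ^{2d}`. -/
noncomputable def ambD (d : ℕ) (F : EuclideanSpace ℝ (Fin d ⊕ Fin d) → ℂ)
    (i : Fin d ⊕ Fin d) (z : EuclideanSpace ℝ (Fin d ⊕ Fin d)) : ℂ :=
  fderiv ℝ F z (EuclideanSpace.single i 1)

/-- The complex derivative `∂F/∂z_j = (1/2)(∂F/∂x_j - i ∂F/∂y_j)`. -/
noncomputable def ambDZ (d : ℕ) (F : EuclideanSpace ℝ (Fin d ⊕ Fin d) → ℂ)
    (j : Fin d) (z : EuclideanSpace ℝ (Fin d ⊕ Fin d)) : ℂ :=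
  (1 / 2) * (ambD d F (Sum.inl j) z - Complex.I * ambD d F (Sum.inr j) z)

/-- The radial derivative `∂/∂r F(rζ)`. -/
noncomputable def radD (d : ℕ) (F : EuclideanSpace ℝ (Fin d ⊕ Fin d) → ℂ)
    (r : ℝ) (ζ : EuclideanSpace ℝ (Fin d ⊕ Fin d)) : ℂ :=
  deriv (fun t : ℝ => F (t • ζ)) r

/-- The `j`-th component of `∇₀^z F` at `z = rζ`, defined through the decomposition
`∇^z = (1/r)∇₀^z + (1/(2r)) z̄ ∂/∂r`, i.e. `(∇₀^z F)_j = r (∇^z F)_j - (1/2) z̄_j ∂_r F`. -/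
noncomputable def sphDZ (d : ℕ) (F : EuclideanSpace ℝ (Fin d ⊕ Fin d) → ℂ)
    (j : Fin d) (r : ℝ) (ζ : EuclideanSpace ℝ (Fin d ⊕ Fin d)) : ℂ :=
  (r : ℂ) * ambDZ d F j (r • ζ) -
    (1 / 2) * (starRingEnd ℂ) ((r : ℝ) * ζ (Sum.inl j) + Complex.I * ((r : ℝ) * ζ (Sum.inr j))) *
      radD d F r ζ

/-- Multiplication by a complex scalar `l` on `ℂ^d ≅ ℝ^d × ℝ^d`. -/
noncomputable def cSMul (d : ℕ) (l : ℂ) (v : EuclideanSpace ℝ (Fin d ⊕ Fin d)) :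
    EuclideanSpace ℝ (Fin d ⊕ Fin d) :=
  (EuclideanSpace.equiv (Fin d ⊕ Fin d) ℝ).symm
    (Sum.elim (fun j => l.re * v (Sum.inl j) - l.im * v (Sum.inr j))
      (fun j => l.im * v (Sum.inl j) + l.re * v (Sum.inr j)))

section Aux

variable {d : ℕ}

/-- rotation by `i` on `ℂ^d ≅ ℝ^d × ℝ^d`. -/
noncomputable def rotV (d : ℕ) (v : EuclideanSpace ℝ (Fin d ⊕ Fin d)) :
    EuclideanSpace ℝ (Fin d ⊕ Fin d) :=
  (EuclideanSpace.equiv (Fin d ⊕ Fin d) ℝ).symm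
    (Sum.elim (fun j => -v (Sum.inr j)) (fun j => v (Sum.inl j)))

lemma cSMul_apply (l : ℂ) (v : EuclideanSpace ℝ (Fin d ⊕ Fin d)) (i : Fin d ⊕ Fin d) :
    cSMul d l v i = Sum.elim (fun j => l.re * v (Sum.inl j) - l.im * v (Sum.inr j))
      (fun j => l.im * v (Sum.inl j) + l.re * v (Sum.inr j)) i := rfl

lemma rotV_apply (v : EuclideanSpace ℝ (Fin d ⊕ Fin d)) (i : Fin d ⊕ Fin d) :
    rotV d v i = Sum.elim (fun j => -v (Sum.inr j)) (fun j => v (Sum.inl j)) i := rfl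

lemma cSMul_real (t : ℝ) (v : EuclideanSpace ℝ (Fin d ⊕ Fin d)) :
    cSMul d (t : ℂ) v = t • v := by
  ext i
  cases i <;> simp [cSMul_apply]

lemma cSMul_rot (t : ℝ) (v : EuclideanSpace ℝ (Fin d ⊕ Fin d)) :
    cSMul d (1 + Complex.I * t) v = v + t • rotV d v := by
  ext i
  cases i <;> simp [cSMul_apply, rotV_apply] <;> ring

lemma diffP (p : MvPolynomial (Fin d ⊕ Fin d) ℂ) :
    Differentiable ℝ
      (fun v : EuclideanSpace ℝ (Fin d ⊕ Fin d) => eval (fun i => ((v i : ℝ) : ℂ)) p) := by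
  intro v
  have h : AnalyticAt ℝ
      (fun v : EuclideanSpace ℝ (Fin d ⊕ Fin d) =>
        aeval (R := ℂ) (fun i => ((v i : ℝ) : ℂ)) p) v := by
    apply AnalyticAt.aeval_mvPolynomial
    intro i
    exact (Complex.ofRealCLM.comp
      (EuclideanSpace.proj i : EuclideanSpace ℝ (Fin d ⊕ Fin d) →L[ℝ] ℝ)).analyticAt v
  have he : ∀ x : (Fin d ⊕ Fin d) → ℂ, aeval (R := ℂ) x p = eval x p := by
    intro x; rw [← coe_aeval_eq_eval]; rfl
  simp only [he] at h
  exact h.differentiableAt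

lemma expand_basis (w : EuclideanSpace ℝ (Fin d ⊕ Fin d)) :
    w = ∑ i : Fin d ⊕ Fin d, w i • EuclideanSpace.single i (1 : ℝ) := by
  have h := (EuclideanSpace.basisFun (Fin d ⊕ Fin d) ℝ).sum_repr w
  simp only [EuclideanSpace.basisFun_apply, EuclideanSpace.basisFun_repr] at h
  exact h.symm

lemma fderiv_expand {F : EuclideanSpace ℝ (Fin d ⊕ Fin d) → ℂ}
    {v : EuclideanSpace ℝ (Fin d ⊕ Fin d)} (w : EuclideanSpace ℝ (Fin d ⊕ Fin d)) :
    fderiv ℝ F v w = ∑ i : Fin d ⊕ Fin d, (w i : ℂ) * ambD d F i v := by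
  conv_lhs => rw [expand_basis w]
  rw [map_sum]
  refine Finset.sum_congr rfl fun i _ => ?_
  rw [(fderiv ℝ F v).map_smul]
  simp [Complex.real_smul, ambD]

lemma line_deriv {F : EuclideanSpace ℝ (Fin d ⊕ Fin d) → ℂ} (hF : Differentiable ℝ F)
    (v w : EuclideanSpace ℝ (Fin d ⊕ Fin d)) :
    deriv (fun t : ℝ => F (v + t • w)) 0 = fderiv ℝ F v w := by
  have h1 : HasDerivAt (fun t : ℝ => v + t • w) w 0 := by
    simpa using ((hasDerivAt_id (0:ℝ)).smul_const w).const_add v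
  have h2 := (hF (v + (0:ℝ) • w)).hasFDerivAt.comp_hasDerivAt 0 h1
  simp only [zero_smul, add_zero] at h2
  exact h2.deriv

lemma euler1 {F : EuclideanSpace ℝ (Fin d ⊕ Fin d) → ℂ} {m n : ℕ} (hF : Differentiable ℝ F)
    (hbideg : ∀ (l : ℂ) v, F (cSMul d l v) = l ^ m * (starRingEnd ℂ) l ^ n * F v)
    (v : EuclideanSpace ℝ (Fin d ⊕ Fin d)) :
    ∑ i : Fin d ⊕ Fin d, (v i : ℂ) * ambD d F i v = (m + n : ℕ) * F v := by
  rw [← fderiv_expand, ← line_deriv hF v v]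
  have hfun : ∀ t : ℝ, F (v + t • v) = ((1 : ℂ) + (t : ℂ)) ^ (m + n) * F v := by
    intro t
    have : v + t • v = cSMul d ((1 + t : ℝ) : ℂ) v := by
      rw [cSMul_real]; ext i; cases i <;> simp <;> ring
    rw [this, hbideg, Complex.conj_ofReal, pow_add]
    push_cast
    ring
  rw [show (fun t : ℝ => F (v + t • v)) = fun t : ℝ => ((1 : ℂ) + (t : ℂ)) ^ (m + n) * F v from
    funext hfun]
  have h1 : HasDerivAt (fun t : ℝ => (1 : ℂ) + (t : ℂ)) 1 0 := by
    simpa using (Complex.ofRealCLM.hasDerivAt (x := (0:ℝ))).const_add (1:ℂ)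
  have hp : HasDerivAt (fun t : ℝ => ((1 : ℂ) + (t : ℂ)) ^ (m + n))
      ((m + n : ℕ) : ℂ) 0 := by
    have hg := hasDerivAt_pow (m + n) ((1 : ℂ))
    have := HasDerivAt.scomp_of_eq (0 : ℝ) hg h1 (by simp)
    exact this.congr_deriv (by simp)
  rw [(hp.mul_const (F v)).deriv]

lemma euler2 {F : EuclideanSpace ℝ (Fin d ⊕ Fin d) → ℂ} {m n : ℕ} (hF : Differentiable ℝ F)
    (hbideg : ∀ (l : ℂ) v, F (cSMul d l v) = l ^ m * (starRingEnd ℂ) l ^ n * F v)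
    (v : EuclideanSpace ℝ (Fin d ⊕ Fin d)) :
    ∑ i : Fin d ⊕ Fin d, (rotV d v i : ℂ) * ambD d F i v
      = Complex.I * ((m : ℂ) - n) * F v := by
  rw [← fderiv_expand, ← line_deriv hF v (rotV d v)]
  have hfun : ∀ t : ℝ, F (v + t • rotV d v)
      = ((1 : ℂ) + Complex.I * t) ^ m * ((1 : ℂ) - Complex.I * t) ^ n * F v := by
    intro t
    rw [← cSMul_rot, hbideg]
    congr 2
    rw [map_add, map_mul, Complex.conj_I, Complex.conj_ofReal, map_one]
    ring
  rw [show (fun t : ℝ => F (v + t • rotV d v))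
      = fun t : ℝ => ((1 : ℂ) + Complex.I * t) ^ m * ((1 : ℂ) - Complex.I * t) ^ n * F v from
    funext hfun]
  have h1 : HasDerivAt (fun t : ℝ => (1 : ℂ) + Complex.I * (t : ℂ)) Complex.I 0 := by
    simpa using ((Complex.ofRealCLM.hasDerivAt (x := (0:ℝ))).const_mul Complex.I).const_add (1:ℂ)
  have h2 : HasDerivAt (fun t : ℝ => (1 : ℂ) - Complex.I * (t : ℂ)) (-Complex.I) 0 := by
    simpa using ((Complex.ofRealCLM.hasDerivAt (x := (0:ℝ))).const_mul Complex.I).const_sub (1:ℂ)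
  have hp1 : HasDerivAt (fun t : ℝ => ((1 : ℂ) + Complex.I * t) ^ m) ((m : ℂ) * Complex.I) 0 := by
    have hg := hasDerivAt_pow m ((1 : ℂ))
    have := HasDerivAt.scomp_of_eq (0 : ℝ) hg h1 (by simp)
    exact this.congr_deriv (by simp [mul_comm])
  have hp2 : HasDerivAt (fun t : ℝ => ((1 : ℂ) - Complex.I * t) ^ n)
      (-((n : ℂ) * Complex.I)) 0 := by
    have hg := hasDerivAt_pow n ((1 : ℂ))
    have := HasDerivAt.scomp_of_eq (0 : ℝ) hg h2 (by simp)
    exact this.congr_deriv (by simp [mul_comm])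
  have hd := ((hp1.mul hp2).mul_const (F v)).deriv
  simp only [Pi.mul_apply] at hd
  rw [hd]
  simp only [Complex.ofReal_zero, mul_zero, add_zero, sub_zero, one_pow, mul_one, one_mul]
  ring

lemma radD_eq {F : EuclideanSpace ℝ (Fin d ⊕ Fin d) → ℂ} {m n : ℕ}
    (hbideg : ∀ (l : ℂ) v, F (cSMul d l v) = l ^ m * (starRingEnd ℂ) l ^ n * F v)
    (r : ℝ) (ζ : EuclideanSpace ℝ (Fin d ⊕ Fin d)) :
    (r : ℂ) * radD d F r ζ = ((m + n : ℕ) : ℂ) * F (r • ζ) := by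
  have hfun : ∀ t : ℝ, F (t • ζ) = ((t : ℝ) : ℂ) ^ (m + n) * F ζ := by
    intro t
    rw [← cSMul_real, hbideg, Complex.conj_ofReal, pow_add]
  have hp : HasDerivAt (fun t : ℝ => ((t : ℝ) : ℂ) ^ (m + n) * F ζ)
      (((m + n : ℕ) : ℂ) * ((r : ℝ) : ℂ) ^ (m + n - 1) * F ζ) r := by
    have hg := hasDerivAt_pow (m + n) ((r : ℂ))
    have h1 : HasDerivAt (fun t : ℝ => ((t : ℝ) : ℂ)) 1 r := by
      exact Complex.ofRealCLM.hasDerivAt (x := r)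
    have := HasDerivAt.scomp_of_eq r hg h1 (by simp)
    simpa [Function.comp] using this.mul_const (F ζ)
  rw [radD, show (fun t : ℝ => F (t • ζ)) = fun t : ℝ => ((t : ℝ) : ℂ) ^ (m + n) * F ζ from
    funext hfun, hp.deriv, hfun r]
  rcases h : m + n with _ | k
  · simp
  · push_cast
    rw [pow_succ]
    ring

lemma eulerZ {F : EuclideanSpace ℝ (Fin d ⊕ Fin d) → ℂ} {m n : ℕ} (hF : Differentiable ℝ F)
    (hbideg : ∀ (l : ℂ) v, F (cSMul d l v) = l ^ m * (starRingEnd ℂ) l ^ n * F v)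
    (v : EuclideanSpace ℝ (Fin d ⊕ Fin d)) :
    ∑ j : Fin d, ((v (Sum.inl j) : ℂ) + Complex.I * (v (Sum.inr j) : ℂ)) * ambDZ d F j v
      = (m : ℂ) * F v := by
  have h1 := euler1 hF hbideg v
  have h2 := euler2 hF hbideg v
  rw [Fintype.sum_sum_type] at h1 h2
  simp only [rotV_apply, Sum.elim_inl, Sum.elim_inr, Complex.ofReal_neg] at h2
  have expand : ∀ j : Fin d,
      ((v (Sum.inl j) : ℂ) + Complex.I * (v (Sum.inr j) : ℂ)) * ambDZ d F j v
      = (1/2) * ((v (Sum.inl j) : ℂ) * ambD d F (Sum.inl j) v)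
        + (1/2) * ((v (Sum.inr j) : ℂ) * ambD d F (Sum.inr j) v)
        - ((Complex.I/2) * ((-(v (Sum.inr j) : ℂ)) * ambD d F (Sum.inl j) v)
          + (Complex.I/2) * ((v (Sum.inl j) : ℂ) * ambD d F (Sum.inr j) v)) := by
    intro j
    rw [ambDZ]
    linear_combination (-(1/2) * (v (Sum.inr j) : ℂ) * ambD d F (Sum.inr j) v) * Complex.I_sq
  rw [Finset.sum_congr rfl fun j _ => expand j]
  rw [Finset.sum_sub_distrib, Finset.sum_add_distrib, Finset.sum_add_distrib,
    ← Finset.mul_sum, ← Finset.mul_sum, ← Finset.mul_sum, ← Finset.mul_sum]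
  push_cast at h1
  linear_combination (1/2) * h1 - (Complex.I/2) * h2
    + (-((m:ℂ) - n)/2 * F v) * Complex.I_sq

end Aux

/-- `z_j = x_j + i y_j` for `z = rζ`. -/
noncomputable def zcD (d : ℕ) (r : ℝ) (ζ : EuclideanSpace ℝ (Fin d ⊕ Fin d)) (j : Fin d) : ℂ :=
  (r : ℂ) * ((ζ (Sum.inl j) : ℝ) : ℂ) + Complex.I * ((r : ℂ) * ((ζ (Sum.inr j) : ℝ) : ℂ))

/-- Let `P, Q` be bigraded solid harmonics of bidegrees `(m,n)`, `(m',n')`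
on `ℂ^d`.  Then for `z = rζ`, `r > 0`, `ζ ∈ S^{2d-1}`:
`⟨∇^z P(z), ∇^z Q(z)⟩ = (1/r²)⟨∇₀^z P(z), ∇₀^z Q(z)⟩
   + (1/(4r²))((3m+n)m' + (m-n)n') P(z) conj(Q(z))`. -/
theorem statement12 (d m n m' n' : ℕ) (hd : 1 ≤ d)
    (P Q : EuclideanSpace ℝ (Fin d ⊕ Fin d) → ℂ)
    (p q : MvPolynomial (Fin d ⊕ Fin d) ℂ)
    (hPp : ∀ v, P v = eval (fun i => ((v i : ℝ) : ℂ)) p)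
    (hQq : ∀ v, Q v = eval (fun i => ((v i : ℝ) : ℂ)) q)
    (hharmP : (∑ i : Fin d ⊕ Fin d, pderiv i (pderiv i p)) = 0)
    (hharmQ : (∑ i : Fin d ⊕ Fin d, pderiv i (pderiv i q)) = 0)
    (hbidegP : ∀ (l : ℂ) v, P (cSMul d l v) = l ^ m * (starRingEnd ℂ) l ^ n * P v)
    (hbidegQ : ∀ (l : ℂ) v, Q (cSMul d l v) = l ^ m' * (starRingEnd ℂ) l ^ n' * Q v)
    (r : ℝ) (hr : 0 < r) (ζ : EuclideanSpace ℝ (Fin d ⊕ Fin d)) (hζ : ‖ζ‖ = 1) :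
    ∑ j : Fin d, ambDZ d P j (r • ζ) * (starRingEnd ℂ) (ambDZ d Q j (r • ζ))
      = (1 / (r : ℂ) ^ 2) *
          ∑ j : Fin d, sphDZ d P j r ζ * (starRingEnd ℂ) (sphDZ d Q j r ζ)
        + (1 / (4 * (r : ℂ) ^ 2)) *
            ((3 * (m : ℂ) + n) * m' + ((m : ℂ) - n) * n') *
            P (r • ζ) * (starRingEnd ℂ) (Q (r • ζ)) := by
  classical
  have hr0 : (r : ℂ) ≠ 0 := by exact_mod_cast hr.ne'
  have hPdiff : Differentiable ℝ P := by
    rw [show P = fun v => eval (fun i => ((v i : ℝ) : ℂ)) p from funext hPp]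
    exact diffP p
  have hQdiff : Differentiable ℝ Q := by
    rw [show Q = fun v => eval (fun i => ((v i : ℝ) : ℂ)) q from funext hQq]
    exact diffP q
  have hvi : ∀ i, (r • ζ : EuclideanSpace ℝ (Fin d ⊕ Fin d)) i = r * ζ i := fun i => rfl
  -- Euler identities
  have hEP : ∑ j : Fin d, zcD d r ζ j * ambDZ d P j (r • ζ) = (m : ℂ) * P (r • ζ) := by
    have h := eulerZ hPdiff hbidegP (r • ζ)
    simpa only [hvi, zcD, Complex.ofReal_mul] using h
  have hEQ : ∑ j : Fin d, zcD d r ζ j * ambDZ d Q j (r • ζ) = (m' : ℂ) * Q (r • ζ) := by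
    have h := eulerZ hQdiff hbidegQ (r • ζ)
    simpa only [hvi, zcD, Complex.ofReal_mul] using h
  have hEQc : ∑ j : Fin d, (starRingEnd ℂ) (zcD d r ζ j * ambDZ d Q j (r • ζ))
      = (m' : ℂ) * (starRingEnd ℂ) (Q (r • ζ)) := by
    have h := congrArg (starRingEnd ℂ) hEQ
    rw [map_sum] at h
    simpa using h
  -- radial identities
  have h1 : (r : ℂ) * radD d P r ζ = ((m : ℂ) + n) * P (r • ζ) := by
    have h := radD_eq hbidegP r ζ
    push_cast at h
    exact h
  have h2 : (r : ℂ) * (starRingEnd ℂ) (radD d Q r ζ)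
      = ((m' : ℂ) + n') * (starRingEnd ℂ) (Q (r • ζ)) := by
    have h := congrArg (starRingEnd ℂ) (radD_eq hbidegQ r ζ)
    simp only [map_mul, Complex.conj_ofReal, map_natCast] at h
    push_cast at h
    exact h
  -- norm identity
  have hnorm : ∑ j : Fin d, ((r * ζ (Sum.inl j)) ^ 2 + (r * ζ (Sum.inr j)) ^ 2) = r ^ 2 := by
    have hn1 : ‖(r • ζ : EuclideanSpace ℝ (Fin d ⊕ Fin d))‖ = r := by
      rw [norm_smul, hζ]
      simp [abs_of_pos hr]
    have hn2 := EuclideanSpace.norm_eq (r • ζ : EuclideanSpace ℝ (Fin d ⊕ Fin d))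
    rw [hn1] at hn2
    have hnn : (0:ℝ) ≤ ∑ i : Fin d ⊕ Fin d,
        ‖(r • ζ : EuclideanSpace ℝ (Fin d ⊕ Fin d)) i‖ ^ 2 :=
      Finset.sum_nonneg fun i _ => sq_nonneg _
    have h3 : r ^ 2 = ∑ i : Fin d ⊕ Fin d,
        ‖(r • ζ : EuclideanSpace ℝ (Fin d ⊕ Fin d)) i‖ ^ 2 := by
      conv_lhs => rw [hn2]
      exact Real.sq_sqrt hnn
    rw [Fintype.sum_sum_type] at h3
    rw [Finset.sum_add_distrib, h3]
    congr 1 <;> refine Finset.sum_congr rfl fun i _ => ?_ <;>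
      rw [Real.norm_eq_abs, _root_.sq_abs, hvi]
  have hzcsum : ∑ j : Fin d, zcD d r ζ j * (starRingEnd ℂ) (zcD d r ζ j) = (r : ℂ) ^ 2 := by
    have h : ∀ j : Fin d, zcD d r ζ j * (starRingEnd ℂ) (zcD d r ζ j)
        = (((r * ζ (Sum.inl j)) ^ 2 + (r * ζ (Sum.inr j)) ^ 2 : ℝ) : ℂ) := by
      intro j
      simp only [zcD, map_add, map_mul, Complex.conj_I, Complex.conj_ofReal]
      push_cast
      linear_combination (-((r : ℂ) * ((ζ (Sum.inr j) : ℝ) : ℂ)) ^ 2) * Complex.I_sq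
    rw [Finset.sum_congr rfl fun j _ => h j, ← Complex.ofReal_sum, hnorm]
    push_cast
    ring
  -- expand the spherical gradient sum
  have key : ∀ j : Fin d, sphDZ d P j r ζ * (starRingEnd ℂ) (sphDZ d Q j r ζ)
      = (r : ℂ) ^ 2 * (ambDZ d P j (r • ζ) * (starRingEnd ℂ) (ambDZ d Q j (r • ζ)))
        - (r : ℂ) / 2 * (starRingEnd ℂ) (radD d Q r ζ) * (zcD d r ζ j * ambDZ d P j (r • ζ))
        - ((r : ℂ) / 2 * radD d P r ζ
            * (starRingEnd ℂ) (zcD d r ζ j * ambDZ d Q j (r • ζ))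
          - 1 / 4 * (radD d P r ζ * (starRingEnd ℂ) (radD d Q r ζ))
              * (zcD d r ζ j * (starRingEnd ℂ) (zcD d r ζ j))) := by
    intro j
    have hP : sphDZ d P j r ζ
        = (r : ℂ) * ambDZ d P j (r • ζ)
          - 1 / 2 * (starRingEnd ℂ) (zcD d r ζ j) * radD d P r ζ := rfl
    have hQ : sphDZ d Q j r ζ
        = (r : ℂ) * ambDZ d Q j (r • ζ)
          - 1 / 2 * (starRingEnd ℂ) (zcD d r ζ j) * radD d Q r ζ := rfl
    rw [hP, hQ]
    simp only [map_sub, map_mul, map_div₀, map_one, map_ofNat, conj_conj, Complex.conj_ofReal]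
    ring
  have hsphsum : ∑ j : Fin d, sphDZ d P j r ζ * (starRingEnd ℂ) (sphDZ d Q j r ζ)
      = (r : ℂ) ^ 2 * ∑ j : Fin d, ambDZ d P j (r • ζ) * (starRingEnd ℂ) (ambDZ d Q j (r • ζ))
        - (r : ℂ) / 2 * (starRingEnd ℂ) (radD d Q r ζ) * ((m : ℂ) * P (r • ζ))
        - ((r : ℂ) / 2 * radD d P r ζ * ((m' : ℂ) * (starRingEnd ℂ) (Q (r • ζ)))
          - 1 / 4 * (radD d P r ζ * (starRingEnd ℂ) (radD d Q r ζ)) * (r : ℂ) ^ 2) := by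
    rw [Finset.sum_congr rfl fun j _ => key j]
    simp only [Finset.sum_sub_distrib]
    simp only [← Finset.mul_sum]
    rw [hEP, hEQc, hzcsum]
  have hu : (r : ℂ) ^ 2 * (1 / (r : ℂ) ^ 2) = 1 := by
    field_simp
  rw [hsphsum]
  linear_combination
    (-(∑ j : Fin d, ambDZ d P j (r • ζ) * (starRingEnd ℂ) (ambDZ d Q j (r • ζ)))) * hu
    + ((m : ℂ) / 2 * (1 / (r : ℂ) ^ 2) * P (r • ζ)) * h2
    + ((m' : ℂ) / 2 * (1 / (r : ℂ) ^ 2) * (starRingEnd ℂ) (Q (r • ζ))) * h1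
    - ((1 / (r : ℂ) ^ 2) * (r : ℂ) / 4 * (starRingEnd ℂ) (radD d Q r ζ)) * h1
    - ((1 / (r : ℂ) ^ 2) * ((m : ℂ) + n) / 4 * P (r • ζ)) * h2
end
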